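/- arXiv:0706.3006 — 11 statements merged into one kernel-verified Lean document; each statement's English description precedes it below -/
import Mathlib

section
/- In a recollement of abelian categories, if L is an object of A with i^*L = 0 and i^!L = 0, then the kernel of the counit σ_L : j_! j^* L → L is isomorphic to i_* i^! j_! j^* L. -/
open CategoryTheory CategoryTheory.Limits

universe v u₁ u₂ u₃

/-- A recollement of abelian categories: six additive functors
`i^* ⊣ i_* ⊣ i^!` and `j_! ⊣ j^* ⊣ j_*` satisfying the axioms (R1)-(R3)
(and the exact sequences of natural transformations (R5)). -/
structure Recollement (A₁ : Type u₁) (A : Type u₂) (A₂ : Type u₃)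
    [Category.{v} A₁] [Category.{v} A] [Category.{v} A₂]
    [Abelian A₁] [Abelian A] [Abelian A₂] where
  /-- the functor `i^* : A ⥤ A'` -/
  iStar : A ⥤ A₁
  /-- the functor `i_* : A' ⥤ A` -/
  iLow : A₁ ⥤ A
  /-- the functor `i^! : A ⥤ A'` -/
  iShriek : A ⥤ A₁
  /-- the functor `j_! : A'' ⥤ A` -/
  jShriek : A₂ ⥤ A
  /-- the functor `j^* : A ⥤ A''` -/
  jStar : A ⥤ A₂
  /-- the functor `j_* : A'' ⥤ A` -/
  jLow : A₂ ⥤ A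
  iStar_additive : iStar.Additive
  iLow_additive : iLow.Additive
  iShriek_additive : iShriek.Additive
  jShriek_additive : jShriek.Additive
  jStar_additive : jStar.Additive
  jLow_additive : jLow.Additive
  /-- `i^* ⊣ i_*` -/
  adj₁ : iStar ⊣ iLow
  /-- `i_* ⊣ i^!` -/
  adj₂ : iLow ⊣ iShriek
  /-- `j_! ⊣ j^*` -/
  adj₃ : jShriek ⊣ jStar
  /-- `j^* ⊣ j_*` -/
  adj₄ : jStar ⊣ jLow
  /-- the adjunction morphism `i^* i_* → Id` is an isomorphism -/
  counit₁_iso : IsIso adj₁.counit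
  /-- the adjunction morphism `Id → i^! i_*` is an isomorphism -/
  unit₂_iso : IsIso adj₂.unit
  /-- the adjunction morphism `Id → j^* j_!` is an isomorphism -/
  unit₃_iso : IsIso adj₃.unit
  /-- the adjunction morphism `j^* j_* → Id` is an isomorphism -/
  counit₄_iso : IsIso adj₄.counit
  iLow_faithful : iLow.Faithful
  iLow_full : iLow.Full
  /-- `j^* i_* = 0` -/
  jStar_iLow_zero : ∀ X : A₁, IsZero (jStar.obj (iLow.obj X))
  /-- `i_*` embeds `A'` onto the full subcategory of objects annihilated by `j^*` -/
  essImage : ∀ L : A, IsZero (jStar.obj L) → ∃ X : A₁, Nonempty (iLow.obj X ≅ L)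
  comp₁ : ∀ L : A, adj₃.counit.app L ≫ adj₁.unit.app L = 0
  /-- exactness of `j_! j^* → Id → i_* i^*` -/
  exact₁ : ∀ L : A, (ShortComplex.mk (adj₃.counit.app L) (adj₁.unit.app L) (comp₁ L)).Exact
  /-- `Id → i_* i^*` is an epimorphism -/
  epi₁ : ∀ L : A, Epi (adj₁.unit.app L)
  comp₂ : ∀ L : A, adj₂.counit.app L ≫ adj₄.unit.app L = 0
  /-- exactness of `i_* i^! → Id → j_* j^*` -/
  exact₂ : ∀ L : A, (ShortComplex.mk (adj₂.counit.app L) (adj₄.unit.app L) (comp₂ L)).Exact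
  /-- `i_* i^! → Id` is a monomorphism -/
  mono₂ : ∀ L : A, Mono (adj₂.counit.app L)

variable {A₁ : Type u₁} {A : Type u₂} {A₂ : Type u₃}
  [Category.{v} A₁] [Category.{v} A] [Category.{v} A₂]
  [Abelian A₁] [Abelian A] [Abelian A₂]


theorem stmt1 (R : Recollement A₁ A A₂) (L : A)
    (h1 : IsZero (R.iStar.obj L)) (h2 : IsZero (R.iShriek.obj L)) :
    Nonempty (kernel (R.adj₃.counit.app L) ≅
      R.iLow.obj (R.iShriek.obj (R.jShriek.obj (R.jStar.obj L)))) := by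
  haveI := R.jStar_additive
  haveI := R.jLow_additive
  haveI := R.unit₃_iso
  set M := R.jShriek.obj (R.jStar.obj L) with hM
  set σ := R.adj₃.counit.app L with hσ
  set ε := R.adj₂.counit.app M with hε
  set u := R.adj₄.unit.app M with hu
  haveI := R.mono₂ M
  -- j^* σ is an isomorphism
  have htri : R.adj₃.unit.app (R.jStar.obj L) ≫ R.jStar.map σ = 𝟙 _ :=
    R.adj₃.right_triangle_components L
  haveI : IsIso (R.adj₃.unit.app (R.jStar.obj L) ≫ R.jStar.map σ) := by
    rw [htri]; infer_instance
  haveI : IsIso (R.jStar.map σ) :=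
    IsIso.of_isIso_comp_left (R.adj₃.unit.app (R.jStar.obj L)) (R.jStar.map σ)
  -- key: any g with g ≫ σ = 0 satisfies g ≫ u = 0
  have key : ∀ {W : A} (g : W ⟶ M), g ≫ σ = 0 → g ≫ u = 0 := by
    intro W g hg
    have h0 : R.jStar.map g ≫ R.jStar.map σ = 0 := by
      rw [← R.jStar.map_comp, hg, Functor.map_zero]
    have hg0 : R.jStar.map g = 0 := by
      rwa [← cancel_mono (R.jStar.map σ), zero_comp]
    have := R.adj₄.unit.naturality g
    rw [hu]
    have : g ≫ R.adj₄.unit.app M = R.adj₄.unit.app W ≫ R.jLow.map (R.jStar.map g) := by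
      simpa using (R.adj₄.unit.naturality g).symm
    rw [this, hg0, Functor.map_zero, comp_zero]
  -- ε ≫ σ = 0 since Hom(i_* X, L) ≅ Hom(X, i^! L) = 0
  have hεσ : ε ≫ σ = 0 := by
    have : (R.adj₂.homEquiv _ _) (ε ≫ σ) = (R.adj₂.homEquiv _ _) 0 :=
      h2.eq_of_tgt _ _
    exact (R.adj₂.homEquiv _ _).injective this
  -- ε is a kernel of u
  have hfk : IsLimit (KernelFork.ofι ε (R.comp₂ M)) := (R.exact₂ M).fIsKernel
  -- ε is a kernel of σ
  have hlim : IsLimit (KernelFork.ofι ε hεσ) :=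
    KernelFork.IsLimit.ofι ε hεσ
      (fun g hg => (KernelFork.IsLimit.lift' hfk g (key g hg)).1)
      (fun g hg => (KernelFork.IsLimit.lift' hfk g (key g hg)).2)
      (fun g hg l hl => by
        rw [← cancel_mono ε, hl]
        exact ((KernelFork.IsLimit.lift' hfk g (key g hg)).2).symm)
  exact ⟨IsLimit.conePointUniqueUpToIso (kernelIsKernel σ) hlim⟩
end

section
/- In a recollement of abelian categories where A has enough projectives, the left derived functor L_1 i^* vanishes on objects of the form j_! X, i.e., (L_1 i^*) ∘ j_! = 0. -/
open CategoryTheory CategoryTheory.Limits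

universe v u₁ u₂ u₃

variable {A₁ : Type u₁} {A : Type u₂} {A₂ : Type u₃}
  [Category.{v} A₁] [Category.{v} A] [Category.{v} A₂]
  [Abelian A₁] [Abelian A] [Abelian A₂]


attribute [local instance] CategoryTheory.Abelian.Pseudoelement.objectToSort
  CategoryTheory.Abelian.Pseudoelement.homToFun

open CategoryTheory.Abelian

theorem stmt3 [EnoughProjectives A] (R : Recollement A₁ A A₂) :
    letI := R.iStar_additive
    ∀ X : A₂, IsZero ((R.iStar.leftDerived 1).obj (R.jShriek.obj X)) := by
  letI := R.iStar_additive
  letI := R.iLow_additive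
  letI := R.jShriek_additive
  letI := R.jStar_additive
  letI := R.iLow_faithful
  haveI : PreservesLimitsOfSize.{0, 0} R.iLow := R.adj₁.rightAdjoint_preservesLimits
  haveI : PreservesColimitsOfSize.{0, 0} R.iLow := R.adj₂.leftAdjoint_preservesColimits
  haveI : PreservesFiniteLimits R.iLow := inferInstance
  haveI : PreservesFiniteColimits R.iLow := inferInstance
  haveI : PreservesLimitsOfSize.{0, 0} R.jStar := R.adj₃.rightAdjoint_preservesLimits
  haveI : PreservesColimitsOfSize.{0, 0} R.jStar := R.adj₄.leftAdjoint_preservesColimits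
  haveI : PreservesFiniteLimits R.jStar := inferInstance
  haveI : PreservesFiniteColimits R.jStar := inferInstance
  haveI : PreservesColimitsOfSize.{0, 0} R.jShriek := R.adj₃.leftAdjoint_preservesColimits
  haveI : PreservesFiniteColimits R.jShriek := inferInstance
  intro X
  obtain ⟨P⟩ : Nonempty (ProjectiveResolution (R.jShriek.obj X)) := HasProjectiveResolution.out
  refine IsZero.of_iso ?_ (P.isoLeftDerivedObj R.iStar 1)
  have hexact :
      ((R.iStar.mapHomologicalComplex (ComplexShape.down ℕ)).obj P.complex).ExactAt 1 := by
    rw [HomologicalComplex.exactAt_iff' _ 2 1 0 (by simp) (by simp)]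
    -- the short complex in A
    set d21 := P.complex.d 2 1 with hd21
    set d10 := P.complex.d 1 0 with hd10
    set π0 := P.π.f 0 with hπ0
    set η := R.adj₁.unit with hη
    set ε := R.adj₃.counit with hε
    -- main exactness after applying i_* i^*
    have main : (ShortComplex.mk ((R.iStar ⋙ R.iLow).map d21) ((R.iStar ⋙ R.iLow).map d10)
        (by rw [← Functor.map_comp, HomologicalComplex.d_comp_d, Functor.map_zero])).Exact := by
      apply Pseudoelement.exact_of_pseudo_exact
      intro b' hb'
      haveI : Epi (η.app (P.complex.X 1)) := R.epi₁ _
      obtain ⟨b, hb⟩ := Pseudoelement.pseudo_surjective_of_epi (η.app (P.complex.X 1)) b'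
      -- step 2 : η (d10 b) = 0
      have nat1 : d10 ≫ η.app (P.complex.X 0)
          = η.app (P.complex.X 1) ≫ (R.iStar ⋙ R.iLow).map d10 := by
        simpa using η.naturality d10
      have h2 : η.app (P.complex.X 0) (d10 b) = 0 := by
        rw [← Pseudoelement.comp_apply, nat1, Pseudoelement.comp_apply, hb]
        exact hb'
      -- step 3 : d10 b = ε c
      obtain ⟨c, hc⟩ := Pseudoelement.pseudo_exact_of_exact (R.exact₁ (P.complex.X 0)) _ h2
      -- ε at j_! X is an isomorphism
      haveI : IsIso (R.adj₃.unit.app X) := by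
        haveI := R.unit₃_iso; infer_instance
      haveI : IsIso (ε.app (R.jShriek.obj X)) := by
        have tri : R.jShriek.map (R.adj₃.unit.app X) ≫ ε.app (R.jShriek.obj X) = 𝟙 _ :=
          R.adj₃.left_triangle_components X
        have hinv : inv (R.jShriek.map (R.adj₃.unit.app X)) = ε.app (R.jShriek.obj X) :=
          IsIso.inv_eq_of_hom_inv_id tri
        rw [← hinv]
        infer_instance
      haveI hiso : IsIso (ε.app (((ChainComplex.single₀ A).obj (R.jShriek.obj X)).X 0)) := by
        exact (inferInstance : IsIso (ε.app (R.jShriek.obj X)))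
      -- step 4/5 : (j_! j^* π0) c = 0
      have nat2 : (R.jStar ⋙ R.jShriek).map π0 ≫ ε.app _ = ε.app (P.complex.X 0) ≫ π0 := by
        exact ε.naturality π0
      have h4 : ((R.jStar ⋙ R.jShriek).map π0) c = 0 := by
        apply Pseudoelement.zero_of_map_zero _
          (Pseudoelement.pseudo_injective_of_mono (ε.app _))
        rw [← Pseudoelement.comp_apply, nat2, Pseudoelement.comp_apply, hc,
          ← Pseudoelement.comp_apply]
        rw [hd10, hπ0, P.complex_d_comp_π_f_zero]
        exact Pseudoelement.zero_apply _ _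
      -- step 6 : exactness of (j_! j^* d10, j_! j^* π0)
      have hS0 : ((ShortComplex.mk d10 π0 P.complex_d_comp_π_f_zero).map
          (R.jStar ⋙ R.jShriek)).Exact := by
        have e1 : ((ShortComplex.mk d10 π0 P.complex_d_comp_π_f_zero).map R.jStar).Exact :=
          P.exact₀.map R.jStar
        haveI : Epi ((ShortComplex.mk d10 π0 P.complex_d_comp_π_f_zero).map R.jStar).g := by
          dsimp; haveI : Epi (P.π.f 0) := inferInstance; exact R.jStar.map_epi π0
        exact e1.map_of_epi_of_preservesCokernel R.jShriek inferInstance inferInstance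
      obtain ⟨e, he⟩ : ∃ e : Pseudoelement ((R.jStar ⋙ R.jShriek).obj (P.complex.X 1)),
          ((R.jStar ⋙ R.jShriek).map d10) e = c := Pseudoelement.pseudo_exact_of_exact hS0 c h4
      -- step 7
      have nat3 : (R.jStar ⋙ R.jShriek).map d10 ≫ ε.app (P.complex.X 0)
          = ε.app (P.complex.X 1) ≫ d10 := by
        simpa using ε.naturality d10
      have he' : Pseudoelement.pseudoApply ((R.jStar ⋙ R.jShriek).map d10) e = c := he
      have hc' : Pseudoelement.pseudoApply (ε.app (P.complex.X 0)) c
          = Pseudoelement.pseudoApply d10 b := hc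
      have h7 : d10 b = d10 (ε.app (P.complex.X 1) e) := by
        rw [← Pseudoelement.comp_apply, ← nat3, Pseudoelement.comp_apply, he', hc']
      -- step 8
      obtain ⟨z, hz0, hz⟩ := Pseudoelement.sub_of_eq_image d10 b (ε.app (P.complex.X 1) e) h7
      -- step 9
      obtain ⟨w, hw⟩ := Pseudoelement.pseudo_exact_of_exact (P.exact_succ 0) z hz0
      refine ⟨η.app (P.complex.X 2) w, ?_⟩
      -- step 10/11/12
      have h10 : η.app (P.complex.X 1) (ε.app (P.complex.X 1) e) = 0 := by
        rw [← Pseudoelement.comp_apply]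
        rw [show ε.app (P.complex.X 1) ≫ η.app (P.complex.X 1) = 0 from R.comp₁ _]
        exact Pseudoelement.zero_apply _ _
      have h11 : η.app (P.complex.X 1) z = b' := by
        rw [hz _ (η.app (P.complex.X 1)) h10, hb]
      have nat4 : d21 ≫ η.app (P.complex.X 1)
          = η.app (P.complex.X 2) ≫ (R.iStar ⋙ R.iLow).map d21 := by
        simpa using η.naturality d21
      show ((R.iStar ⋙ R.iLow).map d21) (η.app (P.complex.X 2) w) = b'
      rw [← Pseudoelement.comp_apply, ← nat4, Pseudoelement.comp_apply, hw, h11]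
    -- transfer the exactness through the faithful exact functor i_*
    have main2 : (ShortComplex.mk (R.iStar.map d21) (R.iStar.map d10)
        (by rw [← Functor.map_comp, HomologicalComplex.d_comp_d, Functor.map_zero])).Exact := by
      rw [← ShortComplex.exact_map_iff_of_faithful _ R.iLow]
      exact main
    exact main2
  rw [HomologicalComplex.exactAt_iff_isZero_homology] at hexact
  exact hexact
end

section
/- In a recollement of abelian categories where A has enough projectives, if L is an object of A with i^*L = 0 and i^!L = 0, then the kernel of σ_L : j_! j^* L → L is isomorphic to i_*((L_1 i^*) L), where L_1 i^* is the first left derived functor of i^*. -/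
open CategoryTheory CategoryTheory.Limits CategoryTheory.Category

universe v u₁ u₂ u₃

variable {A₁ : Type u₁} {A : Type u₂} {A₂ : Type u₃}
  [Category.{v} A₁] [Category.{v} A] [Category.{v} A₂]
  [Abelian A₁] [Abelian A] [Abelian A₂]

section AuxLemmas

variable {C : Type*} [Category C] [Abelian C]

lemma isZero_of_epi_zero {X Y : C} (f : X ⟶ Y) [Epi f] (hf : f = 0) : IsZero Y := by
  rw [IsZero.iff_id_eq_zero, ← cancel_epi f, hf, zero_comp, zero_comp]

lemma isZero_of_faithful_additive {D : Type*} [Category D] [Abelian D]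
    (G : C ⥤ D) [G.Additive] [G.Faithful] {X : C} (h : IsZero (G.obj X)) : IsZero X := by
  rw [IsZero.iff_id_eq_zero]
  apply G.map_injective
  rw [G.map_id, G.map_zero]
  exact h.eq_of_src _ _

/-- If `θ ≫ v` is an isomorphism, then `cokernel θ ≅ kernel v`. -/
noncomputable def cokernelIsoKernelOfCompIso {A B D : C} (θ : A ⟶ B) (v : B ⟶ D)
    (hiso : IsIso (θ ≫ v)) : cokernel θ ≅ kernel v := by
  letI := hiso
  let r : B ⟶ A := v ≫ inv (θ ≫ v)
  have hr : θ ≫ r = 𝟙 A := by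
    simp only [r, ← assoc, IsIso.hom_inv_id]
  let s : B ⟶ B := 𝟙 B - r ≫ θ
  have hsv : s ≫ v = 0 := by
    simp only [s, r, Preadditive.sub_comp, id_comp, assoc, IsIso.inv_hom_id_assoc,
      IsIso.inv_hom_id]
    simp
  have hθs : θ ≫ s = 0 := by
    simp only [s, Preadditive.comp_sub, comp_id, ← assoc, hr, id_comp, sub_self]
  refine ⟨cokernel.desc θ (kernel.lift v s hsv) ?_, kernel.ι v ≫ cokernel.π θ, ?_, ?_⟩
  · rw [← cancel_mono (kernel.ι v), assoc, kernel.lift_ι, zero_comp, hθs]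
  · rw [← cancel_epi (cokernel.π θ)]
    simp only [cokernel.π_desc_assoc, comp_id]
    rw [kernel.lift_ι_assoc]
    simp only [s, Preadditive.sub_comp, id_comp, assoc, cokernel.condition, comp_zero, sub_zero]
  · rw [assoc, cokernel.π_desc, ← cancel_mono (kernel.ι v), assoc, kernel.lift_ι, id_comp]
    simp only [s, Preadditive.comp_sub, comp_id]
    simp [r, kernel.condition_assoc]

end AuxLemmas

open CategoryTheory.Abelian CategoryTheory.Abelian.Pseudoelement
open scoped Pseudoelement

theorem stmt4 [EnoughProjectives A] (R : Recollement A₁ A A₂) (L : A)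
    (h1 : IsZero (R.iStar.obj L)) (h2 : IsZero (R.iShriek.obj L)) :
    letI := R.iStar_additive
    Nonempty (kernel (R.adj₃.counit.app L) ≅
      R.iLow.obj ((R.iStar.leftDerived 1).obj L)) := by
  haveI := R.iStar_additive
  haveI := R.iLow_additive
  haveI := R.jShriek_additive
  haveI := R.jStar_additive
  haveI := R.iLow_faithful
  haveI := R.iLow_full
  haveI := R.counit₁_iso
  haveI := R.unit₃_iso
  set F := R.iStar with hF
  set G := R.iLow with hG
  set Js := R.jShriek with hJs
  set Jt := R.jStar with hJt
  haveI : PreservesColimitsOfSize.{0, 0} F := R.adj₁.leftAdjoint_preservesColimits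
  haveI : PreservesColimitsOfSize.{0, 0} G := R.adj₂.leftAdjoint_preservesColimits
  haveI : PreservesLimitsOfSize.{0, 0} G := R.adj₁.rightAdjoint_preservesLimits
  haveI : PreservesColimitsOfSize.{0, 0} Js := R.adj₃.leftAdjoint_preservesColimits
  haveI : PreservesColimitsOfSize.{0, 0} Jt := R.adj₄.leftAdjoint_preservesColimits
  haveI : PreservesLimitsOfSize.{0, 0} Jt := R.adj₃.rightAdjoint_preservesLimits
  set σ := R.adj₃.counit with hσ
  set σL := R.adj₃.counit.app L with hσL
  -- `i^* j_! = 0`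
  have hFJ : ∀ M : A₂, IsZero (F.obj (Js.obj M)) := by
    intro M
    haveI : Epi (σ.app (Js.obj M)) := by
      have h := R.adj₃.left_triangle_components M
      haveI : Epi (𝟙 (R.jShriek.obj M)) := IsIso.epi_of_iso _
      exact epi_of_epi_fac h
    have hu : R.adj₁.unit.app (Js.obj M) = 0 :=
      zero_of_epi_comp (σ.app (Js.obj M)) (R.comp₁ (Js.obj M))
    haveI := R.epi₁ (Js.obj M)
    exact isZero_of_faithful_additive G (isZero_of_epi_zero _ hu)
  -- `σ_L` is epi
  haveI hσLepi : Epi σL := by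
    have hu : R.adj₁.unit.app L = 0 := by
      have : IsZero (G.obj (F.obj L)) := G.map_isZero h1
      exact this.eq_of_tgt _ _
    exact (R.exact₁ L).epi_f hu
  -- `j^*(σ_L)` is an isomorphism
  haveI hJσ : IsIso (Jt.map σL) := by
    have h := R.adj₃.right_triangle_components L
    have h2 : IsIso (R.adj₃.unit.app (Jt.obj L) ≫ Jt.map σL) := by rw [h]; exact IsIso.id _
    exact IsIso.of_isIso_comp_left (R.adj₃.unit.app (Jt.obj L)) (Jt.map σL)
  -- `σ` is an isomorphism on objects of the form `j_! N`
  have hσJiso : ∀ N : A₂, IsIso (σ.app (Js.obj N)) := by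
    intro N
    have h := R.adj₃.left_triangle_components N
    have h2 : IsIso (Js.map (R.adj₃.unit.app N) ≫ σ.app (Js.obj N)) := by rw [h]; exact IsIso.id _
    exact IsIso.of_isIso_comp_left (Js.map (R.adj₃.unit.app N)) (σ.app (Js.obj N))
  -- the kernel of `σ_L` lies in the image of `i_*`
  have hJC : IsZero (Jt.obj (kernel σL)) := by
    haveI : Mono (Jt.map σL) := inferInstance
    exact IsZero.of_iso (isZero_zero _) (PreservesKernel.iso Jt σL ≪≫ kernel.ofMono (Jt.map σL))
  obtain ⟨Y0, ⟨eY⟩⟩ := R.essImage (kernel σL) hJC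
  haveI : IsIso (R.adj₁.counit.app Y0) := inferInstance
  have eC : kernel σL ≅ G.obj (F.obj (kernel σL)) :=
    eY.symm ≪≫ G.mapIso ((asIso (R.adj₁.counit.app Y0)).symm ≪≫ F.mapIso eY)
  -- a projective resolution of `L`
  let Q : ProjectiveResolution L := ProjectiveResolution.of L
  set P₀ := Q.complex.X 0 with hP₀
  set π₀ : P₀ ⟶ L := Q.π.f 0 with hπ₀def
  haveI hπ₀epi : Epi π₀ := by
    rw [hπ₀def]; exact epi_of_isColimit_cofork Q.isColimitCokernelCofork
  set d₁ := Q.complex.d 1 0 with hd₁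
  set d₂ := Q.complex.d 2 1 with hd₂
  have hd₁π : d₁ ≫ π₀ = 0 := by
    rw [hπ₀def, hd₁]; exact Q.complex_d_comp_π_f_zero
  set K := kernel π₀ with hK
  set kk := kernel.ι π₀ with hkk
  set pm : Q.complex.X 1 ⟶ K := kernel.lift π₀ d₁ hd₁π with hpm
  have hpmk : pm ≫ kk = d₁ := kernel.lift_ι _ _ _
  have hex₀ : (ShortComplex.mk d₁ π₀ hd₁π).Exact := Q.exact₀
  haveI hpmepi : Epi pm := by
    apply Pseudoelement.epi_of_pseudo_surjective
    intro x
    have hx : π₀ (kk x) = 0 := by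
      rw [← Pseudoelement.comp_apply, kernel.condition, Pseudoelement.zero_apply]
    obtain ⟨y, hy⟩ := Pseudoelement.pseudo_exact_of_exact hex₀ (kk x) hx
    refine ⟨y, Pseudoelement.pseudo_injective_of_mono kk ?_⟩
    rw [← Pseudoelement.comp_apply, hpmk]
    exact hy
  -- Part 1 : `(F.leftDerived 1).obj L ≅ kernel (F.map kk)`
  have hdd : d₂ ≫ d₁ = 0 := Q.complex.d_comp_d 2 1 0
  have hd₂pm : d₂ ≫ pm = 0 := by
    rw [← cancel_mono kk, assoc, hpmk, zero_comp]
    exact hdd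
  have hexS2 : (ShortComplex.mk d₂ pm hd₂pm).Exact := by
    apply Pseudoelement.exact_of_pseudo_exact
    intro b hb
    have hb' : d₁ b = 0 := by
      rw [← hpmk, Pseudoelement.comp_apply]
      show kk (pm b) = 0
      rw [hb, Pseudoelement.apply_zero]
    exact Pseudoelement.pseudo_exact_of_exact (Q.exact_succ 0) b hb'
  have hcolim : IsColimit (CokernelCofork.ofπ pm hd₂pm) := hexS2.gIsCokernel
  have wpF : F.map d₂ ≫ F.map pm = 0 := by rw [← F.map_comp, hd₂pm, F.map_zero]
  have hFcolim : IsColimit (CokernelCofork.ofπ (F.map pm) wpF) :=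
    CokernelCofork.mapIsColimit _ hcolim F
  haveI hFpmepi : Epi (F.map pm) := epi_of_isColimit_cofork hFcolim
  set M := (F.mapHomologicalComplex (ComplexShape.down ℕ)).obj Q.complex with hM
  set Ssc := M.sc' 2 1 0 with hSsc
  have wp : Ssc.f ≫ F.map pm = 0 := wpF
  have hp : IsColimit (CokernelCofork.ofπ (F.map pm) wp) := hFcolim
  set g' : F.obj K ⟶ Ssc.X₃ := hp.desc (CokernelCofork.ofπ Ssc.g Ssc.zero) with hg'def
  have hg' : g' = F.map kk := by
    refine (cancel_epi (F.map pm)).1 ?_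
    have hfac : F.map pm ≫ g' = Ssc.g := hp.fac (CokernelCofork.ofπ Ssc.g Ssc.zero) .one
    rw [hfac]
    exact (show Ssc.g = F.map d₁ from rfl).trans (by rw [← hpmk]; exact F.map_comp pm kk)
  let rhd : Ssc.RightHomologyData :=
    { Q := F.obj K
      H := kernel g'
      p := F.map pm
      ι := kernel.ι g'
      wp := wp
      hp := hp
      wι := kernel.condition g'
      hι := kernelIsKernel g' }
  have isoPart1 : (F.leftDerived 1).obj L ≅ kernel (F.map kk) :=
    Q.isoLeftDerivedObj F 1 ≪≫ M.homologyIsoSc' 2 1 0 (by simp) (by simp) ≪≫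
      rhd.homologyIso ≪≫ kernelIsoOfEq hg'
  -- Part 2 : identify the kernel of `σ_L`
  haveI : Projective P₀ := Q.projective 0
  set φ : P₀ ⟶ Js.obj (Jt.obj L) := Projective.factorThru π₀ σL with hφdef
  have hφσ : φ ≫ σL = π₀ := Projective.factorThru_comp _ _
  haveI hφepi : Epi φ := by
    have hπc : IsColimit (CokernelCofork.ofπ π₀ (kernel.condition π₀)) :=
      Abelian.epiIsCokernelOfKernel (KernelFork.ofι (kernel.ι π₀) (kernel.condition π₀)) (kernelIsKernel π₀)
    have hπcJ := CokernelCofork.mapIsColimit _ hπc Jt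
    haveI : Epi (Jt.map π₀) := epi_of_isColimit_cofork hπcJ
    haveI : Epi (Jt.map φ) := by
      have hw : Jt.map φ ≫ Jt.map σL = Jt.map π₀ := by rw [← Jt.map_comp, hφσ]
      have heq : Jt.map φ = Jt.map π₀ ≫ inv (Jt.map σL) := by rw [IsIso.eq_comp_inv, hw]
      rw [heq]; exact epi_comp _ _
    have hJD : IsZero (Jt.obj (cokernel φ)) :=
      IsZero.of_iso (isZero_zero _) (PreservesCokernel.iso Jt φ ≪≫ cokernel.ofEpi (Jt.map φ))
    obtain ⟨Z, ⟨eZ⟩⟩ := R.essImage (cokernel φ) hJD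
    have hq : cokernel.π φ = 0 := by
      have hq' : cokernel.π φ ≫ eZ.inv = 0 := by
        apply (R.adj₃.homEquiv _ _).injective
        apply (R.jStar_iLow_zero Z).eq_of_tgt
      rw [← comp_id (cokernel.π φ), ← eZ.inv_hom_id, ← assoc, hq', zero_comp]
    exact epi_of_cokernel_π_eq_zero _ hq
  set W := kernel φ with hW
  set ι : W ⟶ P₀ := kernel.ι φ with hιdef
  have hιπ : ι ≫ π₀ = 0 := by rw [← hφσ, ← assoc, kernel.condition, zero_comp]
  set e : W ⟶ K := kernel.lift π₀ ι hιπ with he_def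
  have he : e ≫ kk = ι := kernel.lift_ι _ _ _
  have hkφσ : (kk ≫ φ) ≫ σL = 0 := by rw [assoc, hφσ, kernel.condition]
  set ψ : K ⟶ kernel σL := kernel.lift σL (kk ≫ φ) hkφσ with hψdef
  have hψ : ψ ≫ kernel.ι σL = kk ≫ φ := kernel.lift_ι _ _ _
  have heψ : e ≫ ψ = 0 := by
    rw [← cancel_mono (kernel.ι σL), assoc, hψ, ← assoc, he, kernel.condition, zero_comp]
  have hexιφ : (ShortComplex.mk ι φ (kernel.condition φ)).Exact :=
    ShortComplex.exact_of_f_is_kernel _ (kernelIsKernel φ)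
  haveI hψepi : Epi ψ := by
    apply Pseudoelement.epi_of_pseudo_surjective
    intro c
    have hc0 : σL (kernel.ι σL c) = 0 := by
      rw [← Pseudoelement.comp_apply, kernel.condition, Pseudoelement.zero_apply]
    obtain ⟨p, hp2⟩ := Pseudoelement.pseudo_surjective_of_epi φ (kernel.ι σL c)
    have hπp : π₀ p = 0 := by
      rw [← hφσ, Pseudoelement.comp_apply, hp2]
      exact hc0
    have hexk : (ShortComplex.mk kk π₀ (kernel.condition π₀)).Exact :=
      ShortComplex.exact_of_f_is_kernel _ (kernelIsKernel π₀)
    obtain ⟨x, hx⟩ := Pseudoelement.pseudo_exact_of_exact hexk p hπp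
    refine ⟨x, Pseudoelement.pseudo_injective_of_mono (kernel.ι σL) ?_⟩
    rw [← Pseudoelement.comp_apply, hψ, Pseudoelement.comp_apply, hx]
    exact hp2
  have hexeψ : (ShortComplex.mk e ψ heψ).Exact := by
    apply Pseudoelement.exact_of_pseudo_exact
    intro x hx
    have h0 : φ (kk x) = 0 := by
      rw [← Pseudoelement.comp_apply, ← hψ, Pseudoelement.comp_apply]
      show kernel.ι σL (ψ x) = 0
      rw [hx, Pseudoelement.apply_zero]
    obtain ⟨w, hw⟩ := Pseudoelement.pseudo_exact_of_exact hexιφ (kk x) h0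
    refine ⟨w, Pseudoelement.pseudo_injective_of_mono kk ?_⟩
    rw [← Pseudoelement.comp_apply, he]
    exact hw
  set χ : cokernel e ⟶ kernel σL := cokernel.desc e ψ heψ with hχdef
  have hχπ : cokernel.π e ≫ χ = ψ := cokernel.π_desc _ _ _
  haveI : Epi χ := epi_of_epi_fac hχπ
  haveI : Mono χ := by
    apply Pseudoelement.mono_of_zero_of_map_zero
    intro y hy
    obtain ⟨x, rfl⟩ := Pseudoelement.pseudo_surjective_of_epi (cokernel.π e) y
    have hψx : ψ x = 0 := by
      rw [← hχπ, Pseudoelement.comp_apply]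
      exact hy
    obtain ⟨w, hw⟩ := Pseudoelement.pseudo_exact_of_exact hexeψ x hψx
    rw [← hw, ← Pseudoelement.comp_apply, cokernel.condition, Pseudoelement.zero_apply]
  haveI : IsIso χ := isIso_of_mono_of_epi χ
  -- `F.map ι` is an isomorphism
  have hcoeqι : IsColimit (CokernelCofork.ofπ φ (kernel.condition φ)) :=
    Abelian.epiIsCokernelOfKernel (KernelFork.ofι (kernel.ι φ) (kernel.condition φ)) (kernelIsKernel φ)
  haveI hFιepi : Epi (F.map ι) := by
    have hF := CokernelCofork.mapIsColimit _ hcoeqι F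
    exact Preadditive.epi_of_isZero_cokernel' _ hF (hFJ (Jt.obj L))
  haveI hFιmono : Mono (F.map ι) := by
    apply G.mono_of_mono_map
    show Mono ((F ⋙ G).map ι)
    haveI := R.epi₁ W
    haveI := hσJiso (Jt.obj L)
    apply Pseudoelement.mono_of_zero_of_map_zero
    intro x hx
    obtain ⟨w, rfl⟩ := Pseudoelement.pseudo_surjective_of_epi (R.adj₁.unit.app W) x
    have h1 : (R.adj₁.unit.app P₀) (ι w) = 0 := by
      rw [← Pseudoelement.comp_apply,
        show ι ≫ R.adj₁.unit.app P₀ = R.adj₁.unit.app W ≫ (F ⋙ G).map ι by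
          exact R.adj₁.unit.naturality ι,
        Pseudoelement.comp_apply]
      exact hx
    obtain ⟨t, ht⟩ := Pseudoelement.pseudo_exact_of_exact (R.exact₁ P₀) (ι w) h1
    have h2 : (σ.app (Js.obj (Jt.obj L))) (((Jt ⋙ Js).map φ) t) = 0 := by
      rw [← Pseudoelement.comp_apply,
        show (Jt ⋙ Js).map φ ≫ σ.app (Js.obj (Jt.obj L)) = σ.app P₀ ≫ φ by
          simpa using σ.naturality φ,
        Pseudoelement.comp_apply, ht, ← Pseudoelement.comp_apply, kernel.condition,
        Pseudoelement.zero_apply]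
    have h3 : ((Jt ⋙ Js).map φ) t = 0 :=
      Pseudoelement.zero_of_map_zero _
        (Pseudoelement.pseudo_injective_of_mono (σ.app (Js.obj (Jt.obj L)))) _ h2
    have hJJco := CokernelCofork.mapIsColimit _ hcoeqι (Jt ⋙ Js)
    have hexJJ : (ShortComplex.mk ((Jt ⋙ Js).map ι) ((Jt ⋙ Js).map φ)
        (by rw [← Functor.map_comp, kernel.condition, Functor.map_zero])).Exact :=
      ShortComplex.exact_of_g_is_cokernel _ hJJco
    obtain ⟨u, hu⟩ := Pseudoelement.pseudo_exact_of_exact hexJJ t h3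
    have h4 : ι (σ.app W u) = ι w := by
      rw [← Pseudoelement.comp_apply,
        show σ.app W ≫ ι = (Jt ⋙ Js).map ι ≫ σ.app P₀ by
          simpa using (σ.naturality ι).symm,
        Pseudoelement.comp_apply, hu]
      exact ht
    have h5 : σ.app W u = w := Pseudoelement.pseudo_injective_of_mono ι h4
    rw [← h5, ← Pseudoelement.comp_apply, R.comp₁ W, Pseudoelement.zero_apply]
  haveI : IsIso (F.map ι) := isIso_of_mono_of_epi _
  have hiso2 : IsIso (F.map e ≫ F.map kk) := by
    rw [← F.map_comp, he]; infer_instance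
  have isoFC : F.obj (kernel σL) ≅ kernel (F.map kk) :=
    F.mapIso (asIso χ).symm ≪≫ PreservesCokernel.iso F e ≪≫
      cokernelIsoKernelOfCompIso (F.map e) (F.map kk) hiso2
  exact ⟨eC ≪≫ G.mapIso (isoFC ≪≫ isoPart1.symm)⟩
end

section
/- In a recollement of abelian categories, the functor j_{!*} defined by j_{!*}X = Im(N_X : j_! X → j_* X), where N_X corresponds to the identity of X under the natural isomorphism Hom_A(j_! X, j_* X) ≅ Hom_{A''}(X, X), satisfies j^* ∘ j_{!*} ≅ Id_{A''}; in particular j_{!*} is fully faithful. -/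
open CategoryTheory CategoryTheory.Limits

universe v u₁ u₂ u₃

variable {A₁ : Type u₁} {A : Type u₂} {A₂ : Type u₃}
  [Category.{v} A₁] [Category.{v} A] [Category.{v} A₂]
  [Abelian A₁] [Abelian A] [Abelian A₂]


/-- The canonical map `N_X : j_! X ⟶ j_* X` corresponding to the identity of `X`
under `Hom_A(j_! X, j_* X) ≅ Hom_{A''}(X, j^* j_* X) ≅ Hom_{A''}(X, X)`. -/
noncomputable def Recollement.N (R : Recollement A₁ A A₂) (X : A₂) :
    R.jShriek.obj X ⟶ R.jLow.obj X :=
  haveI := R.counit₄_iso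
  (R.adj₃.homEquiv X (R.jLow.obj X)).symm (inv (R.adj₄.counit.app X))

/-- The intermediate extension functor `j_{!*}`, on objects: the image of `N_X`. -/
noncomputable def Recollement.jMid (R : Recollement A₁ A A₂) (X : A₂) : A :=
  Limits.image (R.N X)

theorem stmt5 (R : Recollement A₁ A A₂) :
    ∀ X : A₂, Nonempty (R.jStar.obj (R.jMid X) ≅ X) := by
  intro X
  haveI := R.unit₃_iso
  haveI := R.counit₄_iso
  haveI : R.jStar.PreservesEpimorphisms := Functor.preservesEpimorphisms_of_adjunction R.adj₄
  haveI : R.jStar.PreservesMonomorphisms := Functor.preservesMonomorphisms_of_adjunction R.adj₃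
  have h : R.adj₃.unit.app X ≫ R.jStar.map (R.N X) = inv (R.adj₄.counit.app X) := by
    have := (R.adj₃.homEquiv X (R.jLow.obj X)).apply_symm_apply
      (inv (R.adj₄.counit.app X))
    rw [Adjunction.homEquiv_unit] at this
    rw [Recollement.N]
    exact this
  have hiso : IsIso (R.jStar.map (R.N X)) := by
    have : R.jStar.map (R.N X) = inv (R.adj₃.unit.app X) ≫ inv (R.adj₄.counit.app X) := by
      rw [← h, IsIso.inv_hom_id_assoc]
    rw [this]; infer_instance
  have hfac : R.jStar.map (factorThruImage (R.N X)) ≫ R.jStar.map (image.ι (R.N X)) =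
      R.jStar.map (R.N X) := by
    rw [← Functor.map_comp, image.fac]
  have hepi : Epi (R.jStar.map (image.ι (R.N X))) := by
    have : Epi (R.jStar.map (factorThruImage (R.N X)) ≫ R.jStar.map (image.ι (R.N X))) := by
      rw [hfac]; exact hiso.epi_of_iso _
    exact epi_of_epi (R.jStar.map (factorThruImage (R.N X))) _
  haveI : Mono (R.jStar.map (image.ι (R.N X))) := R.jStar.map_mono _
  haveI hI : IsIso (R.jStar.map (image.ι (R.N X))) := isIso_of_mono_of_epi _
  exact ⟨@asIso _ _ _ _ (R.jStar.map (image.ι (R.N X))) hI ≪≫ asIso (R.adj₄.counit.app X)⟩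
end

section
/- In a recollement of abelian categories, for any object L of A with i^*L = 0 and i^!L = 0, one has j_{!*}(j^* L) ≅ L. Hence j_{!*} gives an equivalence between A'' and the full subcategory of A consisting of objects L with i^*L = 0 and i^!L = 0, with inverse j^*. -/
open CategoryTheory CategoryTheory.Limits

universe v u₁ u₂ u₃

variable {A₁ : Type u₁} {A : Type u₂} {A₂ : Type u₃}
  [Category.{v} A₁] [Category.{v} A] [Category.{v} A₂]
  [Abelian A₁] [Abelian A] [Abelian A₂]


section Aux

variable (R : Recollement A₁ A A₂)

/-- `N ∘ j^* = η ∘ σ`. -/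
lemma Recollement.N_jStar (L : A) :
    R.N (R.jStar.obj L) = R.adj₃.counit.app L ≫ R.adj₄.unit.app L := by
  haveI := R.counit₄_iso
  have htri : R.jStar.map (R.adj₄.unit.app L) ≫ R.adj₄.counit.app (R.jStar.obj L) =
      𝟙 (R.jStar.obj L) := R.adj₄.left_triangle_components L
  have hinv : R.jStar.map (R.adj₄.unit.app L) = inv (R.adj₄.counit.app (R.jStar.obj L)) :=
    IsIso.eq_inv_of_inv_hom_id htri
  have hnat := R.adj₃.counit.naturality (R.adj₄.unit.app L)
  simp only [Functor.id_obj, Functor.id_map, Functor.comp_obj, Functor.comp_map] at hnat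
  rw [Recollement.N, Adjunction.homEquiv_counit, ← hinv, hnat]

/-- If `i^* L = 0` then `σ_L : j_! j^* L → L` is an epimorphism. -/
lemma Recollement.epi_counit₃ (L : A) (h : IsZero (R.iStar.obj L)) :
    Epi (R.adj₃.counit.app L) := by
  haveI := R.iLow_additive
  have hz : IsZero (R.iLow.obj (R.iStar.obj L)) := R.iLow.map_isZero h
  exact (R.exact₁ L).epi_f (hz.eq_zero_of_tgt _)

/-- If `i^! L = 0` then `η_L : L → j_* j^* L` is a monomorphism. -/
lemma Recollement.mono_unit₄ (L : A) (h : IsZero (R.iShriek.obj L)) :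
    Mono (R.adj₄.unit.app L) := by
  haveI := R.iLow_additive
  have hz : IsZero (R.iLow.obj (R.iShriek.obj L)) := R.iLow.map_isZero h
  exact (R.exact₂ L).mono_g (hz.eq_zero_of_src _)

/-- `i^* j_! = 0`. -/
lemma Recollement.isZero_iStar_jShriek (X : A₂) :
    IsZero (R.iStar.obj (R.jShriek.obj X)) := by
  rw [IsZero.iff_id_eq_zero]
  apply (R.adj₁.homEquiv (R.jShriek.obj X) (R.iStar.obj (R.jShriek.obj X))).injective
  apply (R.adj₃.homEquiv X (R.iLow.obj (R.iStar.obj (R.jShriek.obj X)))).injective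
  exact (R.jStar_iLow_zero _).eq_of_tgt _ _

/-- `i^! j_* = 0`. -/
lemma Recollement.isZero_iShriek_jLow (X : A₂) :
    IsZero (R.iShriek.obj (R.jLow.obj X)) := by
  rw [IsZero.iff_id_eq_zero]
  apply (R.adj₂.homEquiv (R.iShriek.obj (R.jLow.obj X)) (R.jLow.obj X)).symm.injective
  apply (R.adj₄.homEquiv (R.iLow.obj (R.iShriek.obj (R.jLow.obj X))) X).symm.injective
  exact (R.jStar_iLow_zero _).eq_of_src _ _

end Aux

/-- For `L` with `i^* L = 0 = i^! L` one has `j_{!*}(j^* L) ≅ L`; moreover `j_{!*}`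
lands in the full subcategory of such objects and `j^* ∘ j_{!*} ≅ Id`, so `j_{!*}`
is an equivalence of `A''` with that subcategory, with inverse `j^*`. -/
theorem stmt6 (R : Recollement A₁ A A₂) :
    (∀ L : A, IsZero (R.iStar.obj L) → IsZero (R.iShriek.obj L) →
      Nonempty (R.jMid (R.jStar.obj L) ≅ L)) ∧
    (∀ X : A₂, IsZero (R.iStar.obj (R.jMid X)) ∧ IsZero (R.iShriek.obj (R.jMid X)) ∧
      Nonempty (R.jStar.obj (R.jMid X) ≅ X)) := by
  constructor
  · intro L h1 h2
    haveI : Epi (R.adj₃.counit.app L) := R.epi_counit₃ L h1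
    haveI : Mono (R.adj₄.unit.app L) := R.mono_unit₄ L h2
    haveI : StrongEpi (R.adj₃.counit.app L) := strongEpi_of_epi _
    exact ⟨(image.isoStrongEpiMono (R.adj₃.counit.app L) (R.adj₄.unit.app L)
      (R.N_jStar L).symm).symm⟩
  · intro X
    haveI := R.counit₄_iso
    haveI := R.unit₃_iso
    refine ⟨?_, ?_, ?_⟩
    · haveI : Functor.PreservesEpimorphisms R.iStar :=
        Functor.preservesEpimorphisms_of_adjunction R.adj₁
      haveI := Functor.map_epi R.iStar (factorThruImage (R.N X))
      have h := IsZero.of_epi_eq_zero (R.iStar.map (factorThruImage (R.N X)))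
        ((R.isZero_iStar_jShriek X).eq_zero_of_src _)
      exact h
    · haveI : Functor.PreservesMonomorphisms R.iShriek :=
        Functor.preservesMonomorphisms_of_adjunction R.adj₂
      haveI := Functor.map_mono R.iShriek (image.ι (R.N X))
      have h := IsZero.of_mono_eq_zero (R.iShriek.map (image.ι (R.N X)))
        ((R.isZero_iShriek_jLow X).eq_zero_of_tgt _)
      exact h
    · -- `j^* N X` is an isomorphism
      haveI hiso : IsIso (R.jStar.map (R.N X)) := by
        haveI : IsIso (R.adj₃.unit.app X ≫ R.jStar.map (R.N X)) := by
          have h0 : R.adj₃.unit.app X ≫ R.jStar.map (R.N X) =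
              (R.adj₃.homEquiv X (R.jLow.obj X)) (R.N X) :=
            (Adjunction.homEquiv_unit R.adj₃ _ _ _).symm
          rw [h0, Recollement.N, Equiv.apply_symm_apply]
          infer_instance
        exact IsIso.of_isIso_comp_left (R.adj₃.unit.app X) _
      have hfac : R.jStar.map (factorThruImage (R.N X)) ≫ R.jStar.map (image.ι (R.N X)) =
          R.jStar.map (R.N X) := by rw [← R.jStar.map_comp, image.fac]
      haveI : Functor.PreservesEpimorphisms R.jStar :=
        Functor.preservesEpimorphisms_of_adjunction R.adj₄
      haveI : Mono (R.jStar.map (factorThruImage (R.N X))) := by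
        haveI : Mono (R.jStar.map (factorThruImage (R.N X)) ≫ R.jStar.map (image.ι (R.N X))) := by
          rw [hfac]; infer_instance
        exact mono_of_mono _ (R.jStar.map (image.ι (R.N X)))
      haveI : IsIso (R.jStar.map (factorThruImage (R.N X))) := isIso_of_mono_of_epi _
      exact ⟨(asIso (R.jStar.map (factorThruImage (R.N X)))).symm ≪≫
        (asIso (R.adj₃.unit.app X)).symm⟩
end

section
/- In a recollement of abelian categories, j^* and j_{!*} induce mutually inverse bijections between the set of isomorphism classes of simple objects L of A with j^*L ≠ 0 and the set of isomorphism classes of nonzero simple objects of A''. -/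
open CategoryTheory CategoryTheory.Limits

universe v u₁ u₂ u₃

variable {A₁ : Type u₁} {A : Type u₂} {A₂ : Type u₃}
  [Category.{v} A₁] [Category.{v} A] [Category.{v} A₂]
  [Abelian A₁] [Abelian A] [Abelian A₂]


namespace Recollement

variable (R : Recollement A₁ A A₂)

lemma unit_comp_jStar_map_N (X : A₂) [IsIso R.adj₄.counit] :
    R.adj₃.unit.app X ≫ R.jStar.map (R.N X) = inv (R.adj₄.counit.app X) := by
  have h := (R.adj₃.homEquiv X (R.jLow.obj X)).apply_symm_apply (inv (R.adj₄.counit.app X))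
  rw [Adjunction.homEquiv_unit] at h
  exact h

lemma isIso_jStar_map_N (X : A₂) : IsIso (R.jStar.map (R.N X)) := by
  haveI := R.counit₄_iso
  haveI := R.unit₃_iso
  have h := R.unit_comp_jStar_map_N X
  have : IsIso (R.adj₃.unit.app X ≫ R.jStar.map (R.N X)) := by rw [h]; infer_instance
  exact IsIso.of_isIso_comp_left (R.adj₃.unit.app X) _

lemma hom_to_jLow_zero {M : A} (X : A₂) (f : M ⟶ R.jLow.obj X)
    (hM : IsZero (R.jStar.obj M)) : f = 0 := by
  haveI := R.jLow_additive
  have h0 : (R.adj₄.homEquiv M X).symm f = 0 := hM.eq_of_src _ _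
  have h := (R.adj₄.homEquiv M X).apply_symm_apply f
  rw [h0, Adjunction.homEquiv_unit, Functor.map_zero, comp_zero] at h
  exact h.symm

lemma hom_from_jShriek_zero {M : A} (X : A₂) (f : R.jShriek.obj X ⟶ M)
    (hM : IsZero (R.jStar.obj M)) : f = 0 := by
  haveI := R.jShriek_additive
  have h0 : (R.adj₃.homEquiv X M) f = 0 := hM.eq_of_tgt _ _
  have h := (R.adj₃.homEquiv X M).symm_apply_apply f
  rw [h0, Adjunction.homEquiv_counit, Functor.map_zero, zero_comp] at h
  exact h.symm

lemma isIso_jStar_map_image_ι (X : A₂) : IsIso (R.jStar.map (image.ι (R.N X))) := by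
  haveI : R.jStar.PreservesMonomorphisms :=
    Functor.preservesMonomorphisms_of_adjunction R.adj₃
  haveI : R.jStar.PreservesEpimorphisms :=
    Functor.preservesEpimorphisms_of_adjunction R.adj₄
  haveI := R.isIso_jStar_map_N X
  have h : R.jStar.map (factorThruImage (R.N X)) ≫ R.jStar.map (image.ι (R.N X)) =
      R.jStar.map (R.N X) := by rw [← R.jStar.map_comp, image.fac]
  haveI : Epi (R.jStar.map (factorThruImage (R.N X)) ≫ R.jStar.map (image.ι (R.N X))) := by
    rw [h]; infer_instance
  haveI : Epi (R.jStar.map (image.ι (R.N X))) :=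
    epi_of_epi (R.jStar.map (factorThruImage (R.N X))) _
  haveI : Mono (R.jStar.map (image.ι (R.N X))) := R.jStar.map_mono _
  exact isIso_of_mono_of_epi _

/-- The canonical isomorphism `j^* (j_{!*} X) ≅ X`. -/
noncomputable def jStarJMidIso (X : A₂) : R.jStar.obj (R.jMid X) ≅ X := by
  haveI := R.counit₄_iso
  haveI := R.isIso_jStar_map_image_ι X
  exact @asIso _ _ _ _ (R.jStar.map (image.ι (R.N X))) (R.isIso_jStar_map_image_ι X) ≪≫ asIso (R.adj₄.counit.app X)

lemma simple_jMid (X : A₂) [hX : Simple X] : Simple (R.jMid X) := by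
  haveI := R.jStar_additive
  haveI : R.jStar.PreservesMonomorphisms :=
    Functor.preservesMonomorphisms_of_adjunction R.adj₃
  haveI : PreservesColimitsOfSize.{0, 0} R.jStar :=
    R.adj₄.leftAdjoint_preservesColimits
  let e := R.jStarJMidIso X
  constructor
  intro Y f hm
  constructor
  · intro hiso h0
    have hz : IsZero Y := IsZero.of_mono_eq_zero f h0
    haveI := hiso
    have hz' : IsZero (R.jMid X) := IsZero.of_epi_eq_zero f h0
    have : IsZero X := (R.jStar.map_isZero hz').of_iso e.symm
    exact (Simple.not_isZero X) this
  · intro hf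
    haveI : Mono (R.jStar.map f) := R.jStar.map_mono f
    have hg : R.jStar.map f ≫ e.hom ≠ 0 := by
      intro h0
      have hmapf : R.jStar.map f = 0 := by
        have := congrArg (fun t => t ≫ e.inv) h0
        simpa using this
      have hzY : IsZero (R.jStar.obj Y) := IsZero.of_mono_eq_zero _ hmapf
      apply hf
      have hι : f ≫ image.ι (R.N X) = 0 := R.hom_to_jLow_zero X _ hzY
      exact (cancel_mono (image.ι (R.N X))).mp (hι.trans zero_comp.symm)
    haveI : Mono (R.jStar.map f ≫ e.hom) := mono_comp _ _
    haveI : IsIso (R.jStar.map f ≫ e.hom) := isIso_of_mono_of_nonzero hg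
    haveI : IsIso (R.jStar.map f) := by
      have : R.jStar.map f = (R.jStar.map f ≫ e.hom) ≫ e.inv := by simp
      rw [this]; infer_instance
    -- now show `f` is epi via the cokernel
    have hcz : IsZero (R.jStar.obj (cokernel f)) := by
      have i1 : R.jStar.obj (cokernel f) ≅ cokernel (R.jStar.map f) :=
        PreservesCokernel.iso R.jStar f
      have i2 : IsZero (cokernel (R.jStar.map f)) :=
        (isZero_zero _).of_iso (cokernel.ofEpi _)
      exact i2.of_iso i1
    have hπ : cokernel.π f = 0 := by
      have h0 : factorThruImage (R.N X) ≫ cokernel.π f = 0 :=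
        R.hom_from_jShriek_zero X _ hcz
      exact (cancel_epi (factorThruImage (R.N X))).mp (h0.trans comp_zero.symm)
    haveI : Epi f := Preadditive.epi_of_cokernel_zero hπ
    exact isIso_of_mono_of_epi f

lemma counit₃_comp_unit₄_eq_N (L : A) :
    R.N (R.jStar.obj L) = R.adj₃.counit.app L ≫ R.adj₄.unit.app L := by
  haveI := R.counit₄_iso
  apply (R.adj₃.homEquiv (R.jStar.obj L) (R.jLow.obj (R.jStar.obj L))).injective
  have h1 := R.unit_comp_jStar_map_N (R.jStar.obj L)
  rw [Adjunction.homEquiv_unit, Adjunction.homEquiv_unit, h1]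
  rw [Functor.map_comp, ← Category.assoc, R.adj₃.right_triangle_components L,
    Category.id_comp]
  exact (IsIso.eq_inv_of_inv_hom_id (R.adj₄.left_triangle_components L)).symm

end Recollement

/-- `j^*` and `j_{!*}` induce mutually inverse bijections between iso-classes of
simple objects `L` of `A` with `j^* L ≠ 0` and iso-classes of (nonzero) simple
objects of `A''`. -/
theorem stmt7 (R : Recollement A₁ A A₂) :
    (∀ L : A, Simple L → ¬ IsZero (R.jStar.obj L) →
      Simple (R.jStar.obj L) ∧ Nonempty (R.jMid (R.jStar.obj L) ≅ L)) ∧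
    (∀ X : A₂, Simple X →
      Simple (R.jMid X) ∧ ¬ IsZero (R.jStar.obj (R.jMid X)) ∧
        Nonempty (R.jStar.obj (R.jMid X) ≅ X)) := by
  constructor
  · intro L hL hLz
    haveI := hL
    haveI := R.jStar_additive
    haveI := R.unit₃_iso
    haveI := R.counit₄_iso
    haveI : R.jStar.PreservesEpimorphisms :=
      Functor.preservesEpimorphisms_of_adjunction R.adj₄
    have hsimple : Simple (R.jStar.obj L) := by
      constructor
      intro V f hm
      constructor
      · intro hiso h0
        haveI := hiso
        exact hLz (IsZero.of_epi_eq_zero f h0)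
      · intro hf
        have hfg : R.adj₃.unit.app V ≫ R.jStar.map ((R.adj₃.homEquiv V L).symm f) = f := by
          have h := (R.adj₃.homEquiv V L).apply_symm_apply f
          rw [Adjunction.homEquiv_unit] at h; exact h
        have hgne : (R.adj₃.homEquiv V L).symm f ≠ 0 := by
          intro h0
          apply hf
          rw [← hfg, h0, Functor.map_zero, comp_zero]
        haveI : Epi ((R.adj₃.homEquiv V L).symm f) := epi_of_nonzero_to_simple hgne
        haveI : Epi (R.jStar.map ((R.adj₃.homEquiv V L).symm f)) := R.jStar.map_epi _
        haveI : Epi f := by rw [← hfg]; exact epi_comp _ _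
        exact isIso_of_mono_of_epi f
    refine ⟨hsimple, ?_⟩
    have hN := R.counit₃_comp_unit₄_eq_N L
    have hεne : R.adj₃.counit.app L ≠ 0 := by
      intro h0
      apply hLz
      rw [IsZero.iff_id_eq_zero]
      have ht := R.adj₃.right_triangle_components L
      rw [h0, Functor.map_zero, comp_zero] at ht
      exact ht.symm
    have hηne : R.adj₄.unit.app L ≠ 0 := by
      intro h0
      apply hLz
      rw [IsZero.iff_id_eq_zero]
      have ht := R.adj₄.left_triangle_components L
      rw [h0, Functor.map_zero, zero_comp] at ht
      exact ht.symm
    haveI : Simple ((𝟭 A).obj L) := hL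
    haveI : Epi (R.adj₃.counit.app L) := epi_of_nonzero_to_simple hεne
    haveI : Mono (R.adj₄.unit.app L) := mono_of_nonzero_from_simple hηne
    haveI : StrongEpi (R.adj₃.counit.app L) := strongEpi_of_epi _
    exact ⟨(image.isoStrongEpiMono (R.adj₃.counit.app L) (R.adj₄.unit.app L) hN.symm).symm⟩
  · intro X hX
    haveI := hX
    refine ⟨R.simple_jMid X, ?_, ⟨R.jStarJMidIso X⟩⟩
    intro h
    exact (Simple.not_isZero X) (h.of_iso (R.jStarJMidIso X).symm)
end

section
/- Let Π_λ be the quotient of the path algebra of the double of the quiver Q_∞ (two vertices ∞, 0; arrows v : 0 → ∞ and X : 0 → 0, with reverse arrows w = v* and Y = X*) by the relations [X,Y] − wv = λ_0 e_0 and vw = λ_∞ e_∞, with λ_0 = 1, λ_∞ = −n. Then the quotient of Π_λ by the two-sided ideal generated by the idempotent e_∞ is isomorphic as a C-algebra to the first Weyl algebra A_1 = C⟨x,y⟩/⟨xy − yx − 1⟩. -/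
open scoped ComplexOrder

/-- Generators of the deformed preprojective algebra `Π_λ(Q_∞)` of the quiver with two
vertices `{∞, 0}`, arrows `v : 0 → ∞`, `X : 0 → 0` and their reverses `w = v*`, `Y = X*`. -/
inductive PiGen : Type
  | X | Y | v | w | e0 | einf
  deriving DecidableEq

/-- Generators as elements of the free algebra. -/
noncomputable def pg (a : PiGen) : FreeAlgebra ℂ PiGen := FreeAlgebra.ι ℂ a

/-- The defining relations of `Π_λ`, `λ = (λ_∞, λ_0)`: the path algebra relations for the
double quiver (orthogonal idempotents `e_0, e_∞` summing to `1`, `X = e_0 X e_0`,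
`Y = e_0 Y e_0`, `v = e_∞ v e_0`, `w = e_0 w e_∞`) together with
`[X,Y] - wv = λ_0 e_0` and `vw = λ_∞ e_∞`. -/
inductive PiRel (lam0 laminf : ℂ) : FreeAlgebra ℂ PiGen → FreeAlgebra ℂ PiGen → Prop
  | idem_e0 : PiRel lam0 laminf (pg .e0 * pg .e0) (pg .e0)
  | idem_einf : PiRel lam0 laminf (pg .einf * pg .einf) (pg .einf)
  | orth₁ : PiRel lam0 laminf (pg .e0 * pg .einf) 0
  | orth₂ : PiRel lam0 laminf (pg .einf * pg .e0) 0
  | sum_one : PiRel lam0 laminf (pg .e0 + pg .einf) 1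
  | X_path : PiRel lam0 laminf (pg .e0 * pg .X * pg .e0) (pg .X)
  | Y_path : PiRel lam0 laminf (pg .e0 * pg .Y * pg .e0) (pg .Y)
  | v_path : PiRel lam0 laminf (pg .einf * pg .v * pg .e0) (pg .v)
  | w_path : PiRel lam0 laminf (pg .e0 * pg .w * pg .einf) (pg .w)
  | main : PiRel lam0 laminf (pg .X * pg .Y - pg .Y * pg .X - pg .w * pg .v) (lam0 • pg .e0)
  | vw : PiRel lam0 laminf (pg .v * pg .w) (laminf • pg .einf)

/-- The deformed preprojective algebra `Π_λ(Q_∞)` with weight `λ = (λ_∞, λ_0)`. -/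
noncomputable abbrev PiAlg (lam0 laminf : ℂ) := RingQuot (PiRel lam0 laminf)

noncomputable def PX (lam0 laminf : ℂ) : PiAlg lam0 laminf :=
  RingQuot.mkAlgHom ℂ (PiRel lam0 laminf) (pg .X)
noncomputable def PY (lam0 laminf : ℂ) : PiAlg lam0 laminf :=
  RingQuot.mkAlgHom ℂ (PiRel lam0 laminf) (pg .Y)
noncomputable def Pv (lam0 laminf : ℂ) : PiAlg lam0 laminf :=
  RingQuot.mkAlgHom ℂ (PiRel lam0 laminf) (pg .v)
noncomputable def Pw (lam0 laminf : ℂ) : PiAlg lam0 laminf :=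
  RingQuot.mkAlgHom ℂ (PiRel lam0 laminf) (pg .w)
noncomputable def Pe0 (lam0 laminf : ℂ) : PiAlg lam0 laminf :=
  RingQuot.mkAlgHom ℂ (PiRel lam0 laminf) (pg .e0)
noncomputable def Peinf (lam0 laminf : ℂ) : PiAlg lam0 laminf :=
  RingQuot.mkAlgHom ℂ (PiRel lam0 laminf) (pg .einf)

/-- Generators `x, y` of the Weyl algebra / free algebra `ℂ⟨x,y⟩`. -/
inductive WGen : Type
  | x | y
  deriving DecidableEq

/-- The Weyl relation `xy - yx = 1`. -/
inductive WRel : FreeAlgebra ℂ WGen → FreeAlgebra ℂ WGen → Prop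
  | mk : WRel (FreeAlgebra.ι ℂ WGen.x * FreeAlgebra.ι ℂ WGen.y -
      FreeAlgebra.ι ℂ WGen.y * FreeAlgebra.ι ℂ WGen.x) 1

/-- The first Weyl algebra `A_1 = ℂ⟨x,y⟩/⟨xy - yx - 1⟩`. -/
noncomputable abbrev WeylAlg := RingQuot WRel

/-- The relation killing `e_∞`, so that `RingQuot` of it is the quotient of `Π_λ`
by the two-sided ideal generated by `e_∞`. -/
inductive KillEinf (n : ℂ) : PiAlg 1 (-n) → PiAlg 1 (-n) → Prop
  | mk : KillEinf n (Peinf 1 (-n)) 0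

/-- The quotient `Π_λ/⟨e_∞⟩`. -/
noncomputable abbrev PiModEinf (n : ℂ) := RingQuot (KillEinf n)

noncomputable def wx : WeylAlg := RingQuot.mkAlgHom ℂ WRel (FreeAlgebra.ι ℂ WGen.x)
noncomputable def wy : WeylAlg := RingQuot.mkAlgHom ℂ WRel (FreeAlgebra.ι ℂ WGen.y)

theorem weyl_rel : wx * wy - wy * wx = 1 := by
  have h := RingQuot.mkAlgHom_rel ℂ WRel.mk
  simpa [wx, wy, map_sub, map_mul, map_one] using h

/-- assignment of Pi generators in the Weyl algebra -/
noncomputable def toW : PiGen → WeylAlg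
  | .X => wx | .Y => wy | .v => 0 | .w => 0 | .e0 => 1 | .einf => 0

noncomputable def Ffree : FreeAlgebra ℂ PiGen →ₐ[ℂ] WeylAlg := FreeAlgebra.lift ℂ toW

theorem Ffree_rel (n : ℂ) : ∀ {a b : FreeAlgebra ℂ PiGen}, PiRel 1 (-n) a b → Ffree a = Ffree b := by
  intro a b h
  induction h <;>
    simp [Ffree, pg, toW, map_mul, map_add, map_sub, map_one, weyl_rel]

noncomputable def Fpi (n : ℂ) : PiAlg 1 (-n) →ₐ[ℂ] WeylAlg :=
  RingQuot.liftAlgHom ℂ ⟨Ffree, fun {_ _} h => Ffree_rel n h⟩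

theorem Fpi_mk (n : ℂ) (a : FreeAlgebra ℂ PiGen) :
    Fpi n (RingQuot.mkAlgHom ℂ (PiRel 1 (-n)) a) = Ffree a := by
  rw [Fpi, RingQuot.liftAlgHom_mkAlgHom_apply]

theorem Fpi_rel (n : ℂ) : ∀ {a b : PiAlg 1 (-n)}, KillEinf n a b → Fpi n a = Fpi n b := by
  intro a b h
  cases h
  simp [Peinf, Fpi_mk, Ffree, pg, toW]

noncomputable def F (n : ℂ) : PiModEinf n →ₐ[ℂ] WeylAlg :=
  RingQuot.liftAlgHom ℂ ⟨Fpi n, fun {_ _} h => Fpi_rel n h⟩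

noncomputable def mk2 (n : ℂ) : FreeAlgebra ℂ PiGen →ₐ[ℂ] PiModEinf n :=
  (RingQuot.mkAlgHom ℂ (KillEinf n)).comp (RingQuot.mkAlgHom ℂ (PiRel 1 (-n)))

theorem mk2_surjective (n : ℂ) : Function.Surjective (mk2 n) :=
  (RingQuot.mkAlgHom_surjective ℂ (KillEinf n)).comp
    (RingQuot.mkAlgHom_surjective ℂ (PiRel 1 (-n)))

theorem mk2_rel (n : ℂ) {a b : FreeAlgebra ℂ PiGen} (h : PiRel 1 (-n) a b) :
    mk2 n a = mk2 n b := by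
  simp [mk2, RingQuot.mkAlgHom_rel ℂ h]

theorem mk2_einf (n : ℂ) : mk2 n (pg .einf) = 0 := by
  have h : RingQuot.mkAlgHom ℂ (KillEinf n) (Peinf 1 (-n)) = 0 := by
    simpa using RingQuot.mkAlgHom_rel ℂ (KillEinf.mk (n := n))
  simpa [mk2, Peinf] using h

theorem mk2_e0 (n : ℂ) : mk2 n (pg .e0) = 1 := by
  have h := mk2_rel n (PiRel.sum_one (lam0 := 1) (laminf := -n))
  simpa only [map_add, mk2_einf, add_zero, map_one] using h

theorem mk2_v (n : ℂ) : mk2 n (pg .v) = 0 := by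
  have h := mk2_rel n (PiRel.v_path (lam0 := 1) (laminf := -n))
  simp only [map_mul, mk2_einf, zero_mul] at h
  exact h.symm

theorem mk2_w (n : ℂ) : mk2 n (pg .w) = 0 := by
  have h := mk2_rel n (PiRel.w_path (lam0 := 1) (laminf := -n))
  simp only [map_mul, mk2_einf, mul_zero] at h
  exact h.symm

theorem mk2_weyl (n : ℂ) :
    mk2 n (pg .X) * mk2 n (pg .Y) - mk2 n (pg .Y) * mk2 n (pg .X) = 1 := by
  have h := mk2_rel n (PiRel.main (lam0 := 1) (laminf := -n))
  simp only [map_sub, map_mul, map_smul, mk2_w, mk2_e0, zero_mul, sub_zero, one_smul] at h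
  rw [sub_eq_iff_eq_add] at h
  rw [h]
  exact add_zero 1

noncomputable def toPi (n : ℂ) : WGen → PiModEinf n
  | .x => mk2 n (pg .X) | .y => mk2 n (pg .Y)

noncomputable def Gfree (n : ℂ) : FreeAlgebra ℂ WGen →ₐ[ℂ] PiModEinf n :=
  FreeAlgebra.lift ℂ (toPi n)

theorem Gfree_rel (n : ℂ) : ∀ {a b : FreeAlgebra ℂ WGen}, WRel a b →
    Gfree n a = Gfree n b := by
  intro a b h
  cases h
  simp [Gfree, toPi, map_sub, map_mul, map_one, mk2_weyl n]

noncomputable def G (n : ℂ) : WeylAlg →ₐ[ℂ] PiModEinf n :=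
  RingQuot.liftAlgHom ℂ ⟨Gfree n, fun {_ _} h => Gfree_rel n h⟩

theorem G_mk (n : ℂ) (a : FreeAlgebra ℂ WGen) :
    G n (RingQuot.mkAlgHom ℂ WRel a) = Gfree n a := by
  rw [G, RingQuot.liftAlgHom_mkAlgHom_apply]

theorem F_mk2 (n : ℂ) (a : FreeAlgebra ℂ PiGen) : F n (mk2 n a) = Ffree a := by
  rw [mk2]
  simp only [AlgHom.comp_apply]
  rw [F, RingQuot.liftAlgHom_mkAlgHom_apply, Fpi_mk]

theorem FG_free (n : ℂ) : (F n).comp (Gfree n) = RingQuot.mkAlgHom ℂ WRel := by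
  apply FreeAlgebra.hom_ext
  funext a
  cases a <;>
    simp [Gfree, toPi, F_mk2, Ffree, pg, toW, wx, wy]

theorem GF_free (n : ℂ) : (G n).comp Ffree = mk2 n := by
  apply FreeAlgebra.hom_ext
  funext a
  have hv := mk2_v n; have hw := mk2_w n; have he0 := mk2_e0 n; have hei := mk2_einf n
  simp only [pg] at hv hw he0 hei
  cases a <;> simp [Ffree, toW, wx, wy, G_mk, Gfree, toPi, pg, hv, hw, he0, hei]

theorem FG (n : ℂ) (a : WeylAlg) : F n (G n a) = a := by
  obtain ⟨b, rfl⟩ := RingQuot.mkAlgHom_surjective ℂ WRel a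
  rw [G_mk]
  exact congrFun (congrArg DFunLike.coe (FG_free n)) b

theorem GF (n : ℂ) (a : PiModEinf n) : G n (F n a) = a := by
  obtain ⟨b, rfl⟩ := mk2_surjective n a
  rw [F_mk2]
  exact congrFun (congrArg DFunLike.coe (GF_free n)) b

/-- For `λ = (λ_∞, λ_0) = (-n, 1)`, the quotient of `Π_λ(Q_∞)` by the two-sided ideal
generated by the idempotent `e_∞` is isomorphic as a `ℂ`-algebra to the first Weyl
algebra `A_1`. -/
theorem stmt8 (n : ℂ) : Nonempty (PiModEinf n ≃ₐ[ℂ] WeylAlg) := by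
  exact ⟨AlgEquiv.ofAlgHom (F n) (G n) (AlgHom.ext (FG n)) (AlgHom.ext (GF n))⟩
end

section
/- Let Π = Π_λ(Q_∞) with λ = (−n, 1) and n ≠ 0 (relations [X,Y] − wv = e_0, vw = −n e_∞). Then Π e_0 Π = Π; consequently the functor M ↦ M e_0 is an equivalence of categories from Mod(Π) to Mod(e_0 Π e_0). -/
open scoped ComplexOrder

variable (n : ℂ)

local notation "E" => Pe0 1 (-n)

lemma E_idem : (E) * (E) = (E) := by
  simpa [Pe0] using RingQuot.mkAlgHom_rel ℂ (PiRel.idem_e0 (lam0 := 1) (laminf := -n))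

/-- The corner (non-unital) subring `e_0 Π e_0`. -/
noncomputable def cornerSubring : NonUnitalSubring (PiAlg 1 (-n)) where
  carrier := {x | E * x * E = x}
  zero_mem' := by simp
  add_mem' := by
    intro a b ha hb
    simp only [Set.mem_setOf_eq] at *
    rw [mul_add, add_mul, ha, hb]
  neg_mem' := by
    intro a ha
    simp only [Set.mem_setOf_eq] at *
    have h : E * -a * E = -(E * a * E) := by
      noncomm_ring
      rw [smul_mul_assoc, mul_smul_comm]
    rw [h, ha]
  mul_mem' := by
    intro a b ha hb
    simp only [Set.mem_setOf_eq] at *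
    have ha' : E * a = a := by
      conv_lhs => rw [← ha]
      rw [← mul_assoc, ← mul_assoc, E_idem, ha]
    have hb' : b * E = b := by
      conv_lhs => rw [← hb]
      rw [mul_assoc, E_idem, hb]
    calc E * (a * b) * E = (E * a) * (b * E) := by noncomm_ring
    _ = a * b := by rw [ha', hb']

/-- The corner ring `e_0 Π e_0`, a unital ring with unit `e_0`. -/
noncomputable def Corner := cornerSubring n

noncomputable instance : NonUnitalRing (Corner n) :=
  inferInstanceAs (NonUnitalRing (cornerSubring n))

noncomputable instance : Ring (Corner n) where
  __ := (inferInstanceAs (NonUnitalRing (cornerSubring n)) : NonUnitalRing (cornerSubring n))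
  one := ⟨E, by
    show E * E * E = E
    rw [E_idem, E_idem]⟩
  one_mul := by
    rintro ⟨a, ha⟩
    ext
    show E * a = a
    conv_lhs => rw [← ha]
    rw [← mul_assoc, ← mul_assoc, E_idem, ha]
  mul_one := by
    rintro ⟨a, ha⟩
    ext
    show a * E = a
    conv_lhs => rw [← ha]
    rw [mul_assoc, E_idem, ha]

/-! ### Auxiliary algebra lemmas -/

lemma sum_one' : E + Peinf 1 (-n) = (1 : PiAlg 1 (-n)) := by
  simpa [Pe0, Peinf, map_add] using
    RingQuot.mkAlgHom_rel ℂ (PiRel.sum_one (lam0 := 1) (laminf := -n))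

lemma einf_v_e0 : Peinf 1 (-n) * Pv 1 (-n) * E = Pv 1 (-n) := by
  simpa [Peinf, Pv, Pe0, map_mul] using
    RingQuot.mkAlgHom_rel ℂ (PiRel.v_path (lam0 := 1) (laminf := -n))

lemma v_mul_E : Pv 1 (-n) * E = Pv 1 (-n) := by
  conv_lhs => rw [← einf_v_e0 n, mul_assoc, E_idem n]
  exact einf_v_e0 n

lemma e0_w_einf : E * Pw 1 (-n) * Peinf 1 (-n) = Pw 1 (-n) := by
  simpa [Peinf, Pw, Pe0, map_mul] using
    RingQuot.mkAlgHom_rel ℂ (PiRel.w_path (lam0 := 1) (laminf := -n))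

lemma E_mul_w : E * Pw 1 (-n) = Pw 1 (-n) := by
  conv_lhs => rw [← e0_w_einf n, ← mul_assoc, ← mul_assoc, E_idem n]
  exact e0_w_einf n

lemma vw_eq : Pv 1 (-n) * Pw 1 (-n) = (-n) • Peinf 1 (-n) := by
  have h := RingQuot.mkAlgHom_rel ℂ (PiRel.vw (lam0 := 1) (laminf := -n))
  simp only [map_mul, map_smul] at h
  simpa [Pv, Pw, Peinf, neg_smul] using h

lemma key (hn : n ≠ 0) :
    (1 : PiAlg 1 (-n)) = E + ((-n)⁻¹ • Pv 1 (-n)) * E * Pw 1 (-n) := by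
  rw [smul_mul_assoc, smul_mul_assoc, v_mul_E n, vw_eq n, smul_smul,
    inv_mul_cancel₀ (neg_ne_zero.mpr hn), one_smul, sum_one' n]

lemma key' (hn : n ≠ 0) :
    ∃ a : PiAlg 1 (-n), (1 : PiAlg 1 (-n)) = E + a * E * Pw 1 (-n) :=
  ⟨_, key n hn⟩

/-! ### Corner ring lemmas -/

lemma corner_prop (s : Corner n) : E * (s : PiAlg 1 (-n)) * E = (s : PiAlg 1 (-n)) := s.2

lemma corner_left (s : Corner n) : E * (s : PiAlg 1 (-n)) = (s : PiAlg 1 (-n)) := by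
  conv_lhs => rw [← corner_prop n s, ← mul_assoc, ← mul_assoc, E_idem n]
  exact corner_prop n s

lemma corner_right (s : Corner n) : (s : PiAlg 1 (-n)) * E = (s : PiAlg 1 (-n)) := by
  conv_lhs => rw [← corner_prop n s, mul_assoc, E_idem n]
  exact corner_prop n s

lemma corner_one_val : ((1 : Corner n) : PiAlg 1 (-n)) = E := rfl

/-- `z*e₀` as an element of the corner ring, for `z` with `e₀ z = z`. -/
noncomputable def cornerOf {z : PiAlg 1 (-n)} (hz : E * z = z) : Corner n :=
  ⟨z * E, by show E * (z * E) * E = z * E; rw [← mul_assoc, hz, mul_assoc, E_idem n]⟩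

@[simp] lemma cornerOf_val {z : PiAlg 1 (-n)} (hz : E * z = z) :
    ((cornerOf n hz : Corner n) : PiAlg 1 (-n)) = z * E := rfl

/-! ### The subgroup `e₀M` of a module `M` -/

def FSub (M : Type) [AddCommGroup M] [Module (PiAlg 1 (-n)) M] : AddSubgroup M where
  carrier := {m | (E : PiAlg 1 (-n)) • m = m}
  zero_mem' := by simp
  add_mem' := by
    intro a b ha hb
    simp only [Set.mem_setOf_eq, smul_add] at *
    rw [ha, hb]
  neg_mem' := by
    intro a ha
    simp only [Set.mem_setOf_eq, smul_neg] at *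
    rw [ha]

lemma FSub.mem_eq {M : Type} [AddCommGroup M] [Module (PiAlg 1 (-n)) M]
    (m : FSub n M) : (E : PiAlg 1 (-n)) • (m : M) = (m : M) := m.2

noncomputable instance FSub.instSMul (M : Type) [AddCommGroup M]
    [Module (PiAlg 1 (-n)) M] : SMul (Corner n) (FSub n M) :=
  ⟨fun s m => ⟨(s : PiAlg 1 (-n)) • (m : M), by
    show (E : PiAlg 1 (-n)) • ((s : PiAlg 1 (-n)) • (m : M)) = (s : PiAlg 1 (-n)) • (m : M)
    rw [smul_smul, corner_left]⟩⟩

@[simp] lemma FSub.val_smul {M : Type} [AddCommGroup M] [Module (PiAlg 1 (-n)) M]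
    (s : Corner n) (m : FSub n M) :
    ((s • m : FSub n M) : M) = (s : PiAlg 1 (-n)) • (m : M) := rfl

noncomputable instance FSub.instModule (M : Type) [AddCommGroup M]
    [Module (PiAlg 1 (-n)) M] : Module (Corner n) (FSub n M) where
  smul := (· • ·)
  one_smul m := Subtype.ext (by rw [FSub.val_smul]; exact m.2)
  mul_smul s t m := Subtype.ext (by simp only [FSub.val_smul]; exact mul_smul _ _ _)
  smul_zero s := Subtype.ext (by simp)
  smul_add s m m' := Subtype.ext (by simp [smul_add])
  add_smul s t m := Subtype.ext (by simp only [FSub.val_smul, AddSubgroup.coe_add]; exact add_smul _ _ _)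
  zero_smul m := Subtype.ext (by simp only [FSub.val_smul]; exact zero_smul _ _)

/-! ### The left ideal `e₀Π` as a `Corner`-module -/

def LSub : AddSubgroup (PiAlg 1 (-n)) where
  carrier := {x | E * x = x}
  zero_mem' := by simp
  add_mem' := by
    intro a b ha hb
    simp only [Set.mem_setOf_eq, mul_add] at *
    rw [ha, hb]
  neg_mem' := by
    intro a ha
    have ha' : E * a = a := ha
    show E * -a = -a
    have h2 : E * -a = -(E * a) := by exact mul_neg E a
    rw [h2, ha']

lemma LSub.mem_eq (x : LSub n) : E * (x : PiAlg 1 (-n)) = (x : PiAlg 1 (-n)) := x.2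

noncomputable instance LSub.instSMul : SMul (Corner n) (LSub n) :=
  ⟨fun s x => ⟨(s : PiAlg 1 (-n)) * (x : PiAlg 1 (-n)), by
    show E * ((s : PiAlg 1 (-n)) * (x : PiAlg 1 (-n))) = _
    rw [← mul_assoc, corner_left]⟩⟩

@[simp] lemma LSub.val_smul (s : Corner n) (x : LSub n) :
    ((s • x : LSub n) : PiAlg 1 (-n)) = (s : PiAlg 1 (-n)) * (x : PiAlg 1 (-n)) := rfl

noncomputable instance LSub.instModule : Module (Corner n) (LSub n) where
  smul := (· • ·)
  one_smul x := Subtype.ext (by rw [LSub.val_smul, corner_one_val]; exact x.2)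
  mul_smul s t x := Subtype.ext (by simp only [LSub.val_smul]; exact mul_assoc _ _ _)
  smul_zero s := Subtype.ext (by simp)
  smul_add s x y := Subtype.ext (by simp [mul_add])
  add_smul s t x := Subtype.ext (by simp only [LSub.val_smul, AddSubgroup.coe_add]; exact add_mul _ _ _)
  zero_smul x := Subtype.ext (by simp only [LSub.val_smul]; exact zero_mul _)

noncomputable def eE : LSub n := ⟨E, E_idem n⟩
noncomputable def ePw : LSub n := ⟨Pw 1 (-n), E_mul_w n⟩

@[simp] lemma eE_val : ((eE n : LSub n) : PiAlg 1 (-n)) = E := rfl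
@[simp] lemma ePw_val : ((ePw n : LSub n) : PiAlg 1 (-n)) = Pw 1 (-n) := rfl

open CategoryTheory

/-! ### `Hom_{Corner}(e₀Π, N)` as a `Π`-module -/

lemma mul_mem_L (x : LSub n) (r : PiAlg 1 (-n)) :
    E * ((x : PiAlg 1 (-n)) * r) = (x : PiAlg 1 (-n)) * r := by
  rw [← mul_assoc, LSub.mem_eq]

noncomputable instance GSMul (N : Type) [AddCommGroup N] [Module (Corner n) N] :
    SMul (PiAlg 1 (-n)) (LSub n →ₗ[Corner n] N) :=
  ⟨fun r f =>
    { toFun := fun x => f ⟨(x : PiAlg 1 (-n)) * r, mul_mem_L n x r⟩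
      map_add' := fun x y => by
        rw [← map_add]
        exact congrArg f (Subtype.ext (add_mul _ _ _))
      map_smul' := fun s x => by
        rw [RingHom.id_apply, ← map_smul]
        exact congrArg f (Subtype.ext (mul_assoc _ _ _)) }⟩

@[simp] lemma G_smul_apply (N : Type) [AddCommGroup N] [Module (Corner n) N]
    (r : PiAlg 1 (-n)) (f : LSub n →ₗ[Corner n] N) (x : LSub n) :
    (r • f) x = f ⟨(x : PiAlg 1 (-n)) * r, mul_mem_L n x r⟩ := rfl

noncomputable instance GMod (N : Type) [AddCommGroup N] [Module (Corner n) N] :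
    Module (PiAlg 1 (-n)) (LSub n →ₗ[Corner n] N) where
  smul := (· • ·)
  one_smul f := LinearMap.ext fun x => by
    rw [G_smul_apply]
    exact congrArg f (Subtype.ext (mul_one _))
  mul_smul r s f := LinearMap.ext fun x => by
    rw [G_smul_apply, G_smul_apply, G_smul_apply]
    exact congrArg f (Subtype.ext (mul_assoc _ _ _).symm)
  smul_zero r := LinearMap.ext fun x => rfl
  smul_add r f g := LinearMap.ext fun x => rfl
  add_smul r s f := LinearMap.ext fun x => by
    show _ = (r • f) x + (s • f) x
    rw [G_smul_apply, G_smul_apply, G_smul_apply, ← map_add]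
    exact congrArg f (Subtype.ext (mul_add _ _ _))
  zero_smul f := LinearMap.ext fun x => by
    show f ⟨(x : PiAlg 1 (-n)) * 0, mul_mem_L n x 0⟩ = 0
    rw [show (⟨(x : PiAlg 1 (-n)) * 0, mul_mem_L n x 0⟩ : LSub n) = 0 from
      Subtype.ext (mul_zero _), map_zero]

/-! ### The two functors -/

noncomputable def Fmap {M M' : Type} [AddCommGroup M] [Module (PiAlg 1 (-n)) M]
    [AddCommGroup M'] [Module (PiAlg 1 (-n)) M'] (f : M →ₗ[PiAlg 1 (-n)] M') :
    FSub n M →ₗ[Corner n] FSub n M' where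
  toFun m := ⟨f (m : M), by
    show (E : PiAlg 1 (-n)) • f (m : M) = f (m : M)
    rw [← map_smul, FSub.mem_eq]⟩
  map_add' m m' := Subtype.ext (map_add f _ _)
  map_smul' s m := Subtype.ext (map_smul f _ _)

noncomputable def Ffun : ModuleCat.{0} (PiAlg 1 (-n)) ⥤ ModuleCat.{0} (Corner n) where
  obj M := ModuleCat.of (Corner n) (FSub n M)
  map {M M'} f := ModuleCat.ofHom (Fmap n f.hom)
  map_id M := ModuleCat.hom_ext (LinearMap.ext fun m => rfl)
  map_comp f g := ModuleCat.hom_ext (LinearMap.ext fun m => rfl)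

noncomputable def Gfun : ModuleCat.{0} (Corner n) ⥤ ModuleCat.{0} (PiAlg 1 (-n)) where
  obj N := ModuleCat.of (PiAlg 1 (-n)) (LSub n →ₗ[Corner n] N)
  map {N N'} g :=
    ModuleCat.ofHom
    { toFun := fun f => g.hom.comp f
      map_add' := fun f f' => LinearMap.ext fun x => map_add g.hom _ _
      map_smul' := fun r f => LinearMap.ext fun x => rfl }
  map_id N := ModuleCat.hom_ext (LinearMap.ext fun f => LinearMap.ext fun x => rfl)
  map_comp g g' := ModuleCat.hom_ext (LinearMap.ext fun f => LinearMap.ext fun x => rfl)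

/-! ### The unit `M ≃ Hom(e₀Π, e₀M)` -/

noncomputable def unitMap (M : Type) [AddCommGroup M] [Module (PiAlg 1 (-n)) M] :
    M →ₗ[PiAlg 1 (-n)] (LSub n →ₗ[Corner n] FSub n M) where
  toFun m :=
    { toFun := fun x => ⟨(x : PiAlg 1 (-n)) • m, by
        show (E : PiAlg 1 (-n)) • ((x : PiAlg 1 (-n)) • m) = _
        rw [smul_smul, LSub.mem_eq]⟩
      map_add' := fun x y => Subtype.ext (add_smul _ _ _)
      map_smul' := fun s x => Subtype.ext (mul_smul _ _ _) }
  map_add' m m' := LinearMap.ext fun x => Subtype.ext (smul_add _ _ _)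
  map_smul' r m := LinearMap.ext fun x => Subtype.ext (smul_smul _ _ _)

lemma smul_phi {M : Type} [AddCommGroup M] [Module (PiAlg 1 (-n)) M]
    (φ : LSub n →ₗ[Corner n] FSub n M) {z : PiAlg 1 (-n)} (hz : E * z = z) (y : LSub n) :
    z • ((φ y : FSub n M) : M) = ((φ (cornerOf n hz • y) : FSub n M) : M) := by
  calc z • ((φ y : FSub n M) : M) = z • ((E : PiAlg 1 (-n)) • ((φ y : FSub n M) : M)) := by
        rw [FSub.mem_eq]
    _ = (z * E) • ((φ y : FSub n M) : M) := smul_smul _ _ _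
    _ = ((cornerOf n hz • φ y : FSub n M) : M) := rfl
    _ = ((φ (cornerOf n hz • y) : FSub n M) : M) :=
        congrArg Subtype.val (map_smul φ _ _).symm

lemma unit_bijective (hn : n ≠ 0) (M : Type) [AddCommGroup M] [Module (PiAlg 1 (-n)) M] :
    Function.Bijective (unitMap n M) := by
  obtain ⟨a, hkey⟩ := key' n hn
  have expand : ∀ z : M, z = E • z + (a * E) • (Pw 1 (-n) • z) := by
    intro z
    conv_lhs => rw [← one_smul (PiAlg 1 (-n)) z, hkey, add_smul, mul_smul]
  constructor
  · intro m m' h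
    have h1 : (E : PiAlg 1 (-n)) • m = (E : PiAlg 1 (-n)) • m' :=
      congrArg Subtype.val (LinearMap.congr_fun h (eE n))
    have h2 : Pw 1 (-n) • m = Pw 1 (-n) • m' :=
      congrArg Subtype.val (LinearMap.congr_fun h (ePw n))
    calc m = E • m + (a * E) • (Pw 1 (-n) • m) := expand m
      _ = E • m' + (a * E) • (Pw 1 (-n) • m') := by rw [h1, h2]
      _ = m' := (expand m').symm
  · intro φ
    have hx2 : ∀ x : LSub n, E * ((x : PiAlg 1 (-n)) * (a * E)) = (x : PiAlg 1 (-n)) * (a * E) :=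
      fun x => by rw [← mul_assoc, LSub.mem_eq]
    have hsum : ∀ x : LSub n,
        cornerOf n (LSub.mem_eq n x) • eE n + cornerOf n (hx2 x) • ePw n = x := by
      intro x
      refine Subtype.ext ?_
      show ((x : PiAlg 1 (-n)) * E) * E + (((x : PiAlg 1 (-n)) * (a * E)) * E) * Pw 1 (-n)
          = (x : PiAlg 1 (-n))
      have p1 : ((x : PiAlg 1 (-n)) * E) * E = (x : PiAlg 1 (-n)) * E := by
        rw [mul_assoc, E_idem n]
      have p2 : (((x : PiAlg 1 (-n)) * (a * E)) * E) * Pw 1 (-n)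
          = (x : PiAlg 1 (-n)) * (a * E * Pw 1 (-n)) := by
        rw [mul_assoc ((x : PiAlg 1 (-n)) * (a * E)) E, mul_assoc (x : PiAlg 1 (-n)) (a * E)]
        rw [← mul_assoc (a * E) E, mul_assoc a E E, E_idem n]
      rw [p1, p2, ← mul_add, ← hkey, mul_one]
    refine ⟨((φ (eE n) : FSub n M) : M) + (a * E) • ((φ (ePw n) : FSub n M) : M), ?_⟩
    refine LinearMap.ext fun x => Subtype.ext ?_
    show (x : PiAlg 1 (-n)) • (((φ (eE n) : FSub n M) : M) + (a * E) • ((φ (ePw n) : FSub n M) : M))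
        = ((φ x : FSub n M) : M)
    calc (x : PiAlg 1 (-n)) • (((φ (eE n) : FSub n M) : M) + (a * E) • ((φ (ePw n) : FSub n M) : M))
        = (x : PiAlg 1 (-n)) • ((φ (eE n) : FSub n M) : M)
          + ((x : PiAlg 1 (-n)) * (a * E)) • ((φ (ePw n) : FSub n M) : M) := by
          rw [smul_add, smul_smul]
      _ = ((φ (cornerOf n (LSub.mem_eq n x) • eE n) : FSub n M) : M)
          + ((φ (cornerOf n (hx2 x) • ePw n) : FSub n M) : M) := by
          rw [smul_phi n φ (LSub.mem_eq n x), smul_phi n φ (hx2 x)]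
      _ = ((φ (cornerOf n (LSub.mem_eq n x) • eE n + cornerOf n (hx2 x) • ePw n) : FSub n M) : M) :=
          (congrArg Subtype.val (map_add φ _ _)).symm
      _ = ((φ x : FSub n M) : M) := congrArg Subtype.val (congrArg φ (hsum x))

/-! ### The counit `e₀·Hom(e₀Π, N) ≃ N` -/

noncomputable def counitMap (N : Type) [AddCommGroup N] [Module (Corner n) N] :
    FSub n (LSub n →ₗ[Corner n] N) →ₗ[Corner n] N where
  toFun φ := ((φ : FSub n (LSub n →ₗ[Corner n] N)) : LSub n →ₗ[Corner n] N) (eE n)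
  map_add' φ ψ := rfl
  map_smul' s φ := by
    calc ((s • φ : FSub n (LSub n →ₗ[Corner n] N)) : LSub n →ₗ[Corner n] N) (eE n)
        = (φ : LSub n →ₗ[Corner n] N) ⟨E * (s : PiAlg 1 (-n)), by
            show E * (E * (s : PiAlg 1 (-n))) = _
            rw [← mul_assoc, E_idem n]⟩ := rfl
      _ = (φ : LSub n →ₗ[Corner n] N) (s • eE n) := by
          refine congrArg _ (Subtype.ext ?_)
          show E * (s : PiAlg 1 (-n)) = (s : PiAlg 1 (-n)) * E
          rw [corner_left n s, corner_right n s]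
      _ = s • (φ : LSub n →ₗ[Corner n] N) (eE n) := map_smul _ _ _

lemma eval_eq (N : Type) [AddCommGroup N] [Module (Corner n) N]
    (φ : FSub n (LSub n →ₗ[Corner n] N)) (x : LSub n) :
    (φ : LSub n →ₗ[Corner n] N) x
      = cornerOf n (LSub.mem_eq n x) • (φ : LSub n →ₗ[Corner n] N) (eE n) := by
  calc (φ : LSub n →ₗ[Corner n] N) x
      = ((E : PiAlg 1 (-n)) • (φ : LSub n →ₗ[Corner n] N)) x := by rw [FSub.mem_eq]
    _ = (φ : LSub n →ₗ[Corner n] N) ⟨(x : PiAlg 1 (-n)) * E, mul_mem_L n x E⟩ := rfl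
    _ = (φ : LSub n →ₗ[Corner n] N) (cornerOf n (LSub.mem_eq n x) • eE n) := by
        refine congrArg _ (Subtype.ext ?_)
        show (x : PiAlg 1 (-n)) * E = ((x : PiAlg 1 (-n)) * E) * E
        rw [mul_assoc, E_idem n]
    _ = cornerOf n (LSub.mem_eq n x) • (φ : LSub n →ₗ[Corner n] N) (eE n) := map_smul _ _ _

lemma counit_bijective (N : Type) [AddCommGroup N] [Module (Corner n) N] :
    Function.Bijective (counitMap n N) := by
  constructor
  · intro φ ψ h
    have h' : (φ : LSub n →ₗ[Corner n] N) (eE n) = (ψ : LSub n →ₗ[Corner n] N) (eE n) := h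
    refine Subtype.ext (LinearMap.ext fun x => ?_)
    rw [eval_eq n N φ x, eval_eq n N ψ x, h']
  · intro ν
    refine ⟨⟨{ toFun := fun x => cornerOf n (LSub.mem_eq n x) • ν
               map_add' := fun x y => by
                 rw [← add_smul]
                 refine congrArg (· • ν) (Subtype.ext ?_)
                 exact add_mul _ _ _
               map_smul' := fun s x => by
                 rw [RingHom.id_apply, ← mul_smul]
                 refine congrArg (· • ν) (Subtype.ext ?_)
                 exact mul_assoc _ _ _ }, ?_⟩, ?_⟩
    · show (E : PiAlg 1 (-n)) • _ = _
      refine LinearMap.ext fun x => ?_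
      show cornerOf n (LSub.mem_eq n ⟨(x : PiAlg 1 (-n)) * E, mul_mem_L n x E⟩) • ν
          = cornerOf n (LSub.mem_eq n x) • ν
      refine congrArg (· • ν) (Subtype.ext ?_)
      show ((x : PiAlg 1 (-n)) * E) * E = (x : PiAlg 1 (-n)) * E
      rw [mul_assoc, E_idem n]
    · show cornerOf n (LSub.mem_eq n (eE n)) • ν = ν
      rw [show cornerOf n (LSub.mem_eq n (eE n)) = 1 from Subtype.ext (E_idem n), one_smul]

/-! ### The equivalence of categories -/

noncomputable def modEquiv (hn : n ≠ 0) :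
    ModuleCat.{0} (PiAlg 1 (-n)) ≌ ModuleCat.{0} (Corner n) :=
  CategoryTheory.Equivalence.mk (Ffun n) (Gfun n)
    (NatIso.ofComponents
      (fun M => (LinearEquiv.ofBijective (unitMap n M) (unit_bijective n hn M)).toModuleIso)
      (fun {M M'} f => ModuleCat.hom_ext (LinearMap.ext fun m => LinearMap.ext fun x => Subtype.ext
        ((map_smul f.hom (x : PiAlg 1 (-n)) m).symm))))
    (NatIso.ofComponents
      (fun N => (LinearEquiv.ofBijective (counitMap n N) (counit_bijective n N)).toModuleIso)
      (fun {N N'} g => ModuleCat.hom_ext (LinearMap.ext fun φ => rfl)))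
/-- `Π e_0 Π = Π`; consequently `Mod(Π) ≃ Mod(e_0 Π e_0)`. -/
theorem stmt9 (hn : n ≠ 0) :
    TwoSidedIdeal.span {E} = (⊤ : TwoSidedIdeal (PiAlg 1 (-n))) ∧
    Nonempty (ModuleCat.{0} (PiAlg 1 (-n)) ≌ ModuleCat.{0} (Corner n)) := by
  constructor
  · obtain ⟨a, hkey⟩ := key' n hn
    refine TwoSidedIdeal.eq_top _ ?_
    rw [hkey]
    have hE : E ∈ TwoSidedIdeal.span {E} :=
      TwoSidedIdeal.subset_span (Set.mem_singleton _)
    exact TwoSidedIdeal.add_mem _ hE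
      (TwoSidedIdeal.mul_mem_right _ _ _ (TwoSidedIdeal.mul_mem_left _ _ _ hE))
  · exact ⟨modEquiv n hn⟩
end

section
/- Let Γ be a cyclic group of order m with primitive character χ, and let S_τ(Γ) be the algebra generated by x, y and the group algebra CΓ with relations g·x = χ(g) x·g, g·y = χ^{−1}(g) y·g, xy − yx = τ, where τ ∈ CΓ. Let Π_τ(Q) be the deformed preprojective algebra of the cyclic quiver with m vertices e_0,...,e_{m−1} and arrows X_k : k+1 → k (indices mod m) with reverses Y_k, with relations X_k Y_k − Y_{k−1} X_{k−1} = τ_k e_k (indices mod m). Then the assignment sending the idempotent ε_i = (1/m) Σ_{g∈Γ} χ^i(g) g to e_i, x to Σ_i X_i, and y to Σ_i Y_i extends to an algebra isomorphism S_τ(Γ) → Π_τ(Q). -/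
/-- Generators of the deformed preprojective algebra of the cyclic quiver of type
`Ã_m`: arrows `X_k : k+1 → k`, reverse arrows `Y_k : k → k+1`, and vertex
idempotents `e_k`, `k ∈ ℤ/mℤ`. -/
inductive CGen (m : ℕ) : Type
  | X (k : ZMod m) | Y (k : ZMod m) | e (k : ZMod m)

/-- Generators as elements of the free algebra. -/
noncomputable def cgen {m : ℕ} (a : CGen m) : FreeAlgebra ℂ (CGen m) := FreeAlgebra.ι ℂ a

/-- Defining relations of the deformed preprojective algebra `Π_τ(Q)` of the cyclic
quiver: orthogonal idempotents summing to `1`, path relations `e_k X_k e_{k+1} = X_k`,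
`e_{k+1} Y_k e_k = Y_k`, and `X_k Y_k - Y_{k-1} X_{k-1} = τ_k e_k`. -/
inductive CRel (m : ℕ) [NeZero m] (τ : ZMod m → ℂ) :
    FreeAlgebra ℂ (CGen m) → FreeAlgebra ℂ (CGen m) → Prop
  | idem (k l : ZMod m) :
      CRel m τ (cgen (.e k) * cgen (.e l)) (if k = l then cgen (.e k) else 0)
  | sum_one : CRel m τ (∑ k : ZMod m, cgen (.e k)) 1
  | pathX (k : ZMod m) : CRel m τ (cgen (.e k) * cgen (.X k) * cgen (.e (k + 1))) (cgen (.X k))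
  | pathY (k : ZMod m) : CRel m τ (cgen (.e (k + 1)) * cgen (.Y k) * cgen (.e k)) (cgen (.Y k))
  | main (k : ZMod m) :
      CRel m τ (cgen (.X k) * cgen (.Y k) - cgen (.Y (k - 1)) * cgen (.X (k - 1)))
        (τ k • cgen (.e k))

/-- The deformed preprojective algebra `Π_τ(Q)` of the cyclic quiver. -/
noncomputable abbrev CPi (m : ℕ) [NeZero m] (τ : ZMod m → ℂ) := RingQuot (CRel m τ)

/-- Generators of `S_τ(Γ)` for `Γ = ℤ/mℤ`: the elements `x`, `y` and the group
elements `u_g`, `g ∈ Γ`. -/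
inductive SGen (m : ℕ) : Type
  | x | y | u (g : ZMod m)

noncomputable def sgen {m : ℕ} (a : SGen m) : FreeAlgebra ℂ (SGen m) := FreeAlgebra.ι ℂ a

/-- The idempotent `ε_k = (1/|Γ|) ∑_{g ∈ Γ} χ^k(g) g` of `ℂΓ`, where `χ(g) = ζ^g`. -/
noncomputable def epsS (m : ℕ) [NeZero m] (ζ : ℂ) (k : ZMod m) : FreeAlgebra ℂ (SGen m) :=
  ((m : ℂ))⁻¹ • ∑ g : ZMod m, ζ ^ (k * g).val • sgen (.u g)

/-- Defining relations of `S_τ(Γ)`: group algebra relations for `Γ`, the crossed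
product relations `g x = χ(g) x g`, `g y = χ(g)⁻¹ y g`, and `xy - yx = τ`, where
`τ = ∑_k τ_k ε_k ∈ ℂΓ`. -/
inductive SRel (m : ℕ) [NeZero m] (ζ : ℂ) (τ : ZMod m → ℂ) :
    FreeAlgebra ℂ (SGen m) → FreeAlgebra ℂ (SGen m) → Prop
  | grp (g h : ZMod m) : SRel m ζ τ (sgen (.u g) * sgen (.u h)) (sgen (.u (g + h)))
  | one : SRel m ζ τ (sgen (.u 0)) 1
  | ux (g : ZMod m) :
      SRel m ζ τ (sgen (.u g) * sgen .x) (ζ ^ g.val • (sgen .x * sgen (.u g)))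
  | uy (g : ZMod m) :
      SRel m ζ τ (sgen (.u g) * sgen .y) (ζ ^ (-g).val • (sgen .y * sgen (.u g)))
  | comm : SRel m ζ τ (sgen .x * sgen .y - sgen .y * sgen .x)
      (∑ k : ZMod m, τ k • epsS m ζ k)

/-- The algebra `S_τ(Γ)`, `Γ ≅ ℤ/mℤ`. -/
noncomputable abbrev SAlg (m : ℕ) [NeZero m] (ζ : ℂ) (τ : ZMod m → ℂ) := RingQuot (SRel m ζ τ)

set_option linter.unusedSectionVars false

/-! ### Scalar lemmas -/
section Scalars
variable {m : ℕ} [NeZero m] {ζ : ℂ} (hζ : IsPrimitiveRoot ζ m)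
include hζ

lemma zc_congr {a b : ℕ} (h : a ≡ b [MOD m]) : ζ ^ a = ζ ^ b := by
  have hm : ζ ^ m = 1 := hζ.pow_eq_one
  have key : ∀ n : ℕ, ζ ^ n = ζ ^ (n % m) := by
    intro n
    conv_lhs => rw [← Nat.div_add_mod n m]
    rw [pow_add, pow_mul, hm, one_pow, one_mul]
  rw [key a, key b, h]

lemma zc_add (a b : ZMod m) : ζ ^ (a + b).val = ζ ^ a.val * ζ ^ b.val := by
  rw [← pow_add]
  exact zc_congr hζ (by rw [ZMod.val_add]; exact (Nat.mod_modEq _ m))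

lemma zc_add' {a b c : ZMod m} (h : a + b = c) :
    ζ ^ a.val * ζ ^ b.val = ζ ^ c.val := by rw [← h, zc_add hζ]

lemma zc_mul_val (a b : ZMod m) : ζ ^ (a * b).val = ζ ^ (a.val * b.val) := by
  refine zc_congr hζ ?_
  rw [ZMod.val_mul]; exact (Nat.mod_modEq _ m)

omit hζ in
lemma zc_zero : ζ ^ (0 : ZMod m).val = 1 := by
  rw [ZMod.val_zero, pow_zero]

lemma char_sum (c : ZMod m) :
    ∑ g : ZMod m, ζ ^ (c * g).val = if c = 0 then (m : ℂ) else 0 := by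
  split_ifs with hc
  · subst hc; simp [ZMod.card]
  · set S := ∑ g : ZMod m, ζ ^ (c * g).val with hS
    have hw1 : ζ ^ c.val ≠ 1 := by
      refine hζ.pow_ne_one_of_pos_of_lt ?_ (ZMod.val_lt c)
      exact (fun h => hc (by rwa [← ZMod.val_eq_zero]))
    have key : ζ ^ c.val * S = S := by
      rw [hS, Finset.mul_sum]
      refine Fintype.sum_equiv (Equiv.addRight (1 : ZMod m)) _ _ ?_
      intro g
      simp only [Equiv.coe_addRight]
      rw [← zc_add hζ]
      congr 1
      ring
    have h0 : (ζ ^ c.val - 1) * S = 0 := by rw [sub_mul, one_mul, key, sub_self]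
    rcases mul_eq_zero.mp h0 with h | h
    · exact absurd (by linear_combination h) hw1
    · exact h

end Scalars

/-! ### Generators in the quotients -/
section Main
variable (m : ℕ) [NeZero m] (ζ : ℂ) (τ : ZMod m → ℂ)

noncomputable def ce (k : ZMod m) : CPi m τ := RingQuot.mkAlgHom ℂ (CRel m τ) (cgen (.e k))
noncomputable def cX (k : ZMod m) : CPi m τ := RingQuot.mkAlgHom ℂ (CRel m τ) (cgen (.X k))
noncomputable def cY (k : ZMod m) : CPi m τ := RingQuot.mkAlgHom ℂ (CRel m τ) (cgen (.Y k))
noncomputable def sx : SAlg m ζ τ := RingQuot.mkAlgHom ℂ (SRel m ζ τ) (sgen .x)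
noncomputable def sy : SAlg m ζ τ := RingQuot.mkAlgHom ℂ (SRel m ζ τ) (sgen .y)
noncomputable def su (g : ZMod m) : SAlg m ζ τ := RingQuot.mkAlgHom ℂ (SRel m ζ τ) (sgen (.u g))
noncomputable def se (k : ZMod m) : SAlg m ζ τ := RingQuot.mkAlgHom ℂ (SRel m ζ τ) (epsS m ζ k)

/-! ### CPi-side relations -/

lemma ce_mul (k l : ZMod m) : ce m τ k * ce m τ l = if k = l then ce m τ k else 0 := by
  have h := RingQuot.mkAlgHom_rel ℂ (CRel.idem (τ := τ) k l)
  rw [map_mul, apply_ite (RingQuot.mkAlgHom ℂ (CRel m τ)), map_zero] at h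
  exact h

lemma ce_idem (k : ZMod m) : ce m τ k * ce m τ k = ce m τ k := by
  rw [ce_mul, if_pos rfl]

lemma ce_sum : ∑ k : ZMod m, ce m τ k = 1 := by
  have h := RingQuot.mkAlgHom_rel ℂ (CRel.sum_one (τ := τ))
  rw [map_sum, map_one] at h
  exact h

lemma cX_eq (k : ZMod m) : ce m τ k * cX m τ k * ce m τ (k + 1) = cX m τ k := by
  have h := RingQuot.mkAlgHom_rel ℂ (CRel.pathX (τ := τ) k)
  rw [map_mul, map_mul] at h
  exact h

lemma cY_eq (k : ZMod m) : ce m τ (k + 1) * cY m τ k * ce m τ k = cY m τ k := by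
  have h := RingQuot.mkAlgHom_rel ℂ (CRel.pathY (τ := τ) k)
  rw [map_mul, map_mul] at h
  exact h

lemma cMain (k : ZMod m) :
    cX m τ k * cY m τ k - cY m τ (k - 1) * cX m τ (k - 1) = τ k • ce m τ k := by
  have h := RingQuot.mkAlgHom_rel ℂ (CRel.main (τ := τ) k)
  rw [map_sub, map_mul, map_mul, map_smul] at h
  exact h

lemma ce_cX (j k : ZMod m) : ce m τ j * cX m τ k = if j = k then cX m τ k else 0 := by
  conv_lhs => rw [← cX_eq m τ k]
  rw [← mul_assoc, ← mul_assoc, ce_mul]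
  split_ifs with h
  · subst h; exact cX_eq m τ j
  · simp

lemma cX_ce (k j : ZMod m) : cX m τ k * ce m τ j = if k + 1 = j then cX m τ k else 0 := by
  conv_lhs => rw [← cX_eq m τ k]
  rw [mul_assoc (ce m τ k * cX m τ k), ce_mul]
  split_ifs with h
  · exact cX_eq m τ k
  · simp

lemma ce_cY (j k : ZMod m) : ce m τ j * cY m τ k = if j = k + 1 then cY m τ k else 0 := by
  conv_lhs => rw [← cY_eq m τ k]
  rw [← mul_assoc, ← mul_assoc, ce_mul]
  split_ifs with h
  · subst h; exact cY_eq m τ k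
  · simp

lemma cY_ce (k j : ZMod m) : cY m τ k * ce m τ j = if k = j then cY m τ k else 0 := by
  conv_lhs => rw [← cY_eq m τ k]
  rw [mul_assoc (ce m τ (k + 1) * cY m τ k), ce_mul]
  split_ifs with h
  · exact cY_eq m τ k
  · simp

lemma cX_cY (k l : ZMod m) :
    cX m τ k * cY m τ l = if k = l then cX m τ k * cY m τ k else 0 := by
  have hX : cX m τ k * ce m τ (k + 1) = cX m τ k := by rw [cX_ce, if_pos rfl]
  conv_lhs => rw [← hX]
  rw [mul_assoc, ce_cY]
  by_cases h : k = l
  · subst h; simp [hX]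
  · have h2 : ¬ (k + 1 = l + 1) := fun hh => h (by
      have := add_right_cancel hh; exact this)
    simp [h, h2]

lemma cY_cX (k l : ZMod m) :
    cY m τ k * cX m τ l = if k = l then cY m τ k * cX m τ k else 0 := by
  have hY : cY m τ k * ce m τ k = cY m τ k := by rw [cY_ce, if_pos rfl]
  conv_lhs => rw [← hY]
  rw [mul_assoc, ce_cX]
  by_cases h : k = l
  · subst h; simp [hY]
  · simp [h]

lemma cmain_sum :
    ∑ k : ZMod m, (cX m τ k * cY m τ k - cY m τ k * cX m τ k)
      = ∑ k : ZMod m, τ k • ce m τ k := by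
  have hre : ∑ k : ZMod m, cY m τ k * cX m τ k
      = ∑ k : ZMod m, cY m τ (k - 1) * cX m τ (k - 1) := by
    refine Fintype.sum_equiv (Equiv.addRight (1 : ZMod m)) _ _ ?_
    intro k
    simp
  calc ∑ k : ZMod m, (cX m τ k * cY m τ k - cY m τ k * cX m τ k)
      = ∑ k : ZMod m, cX m τ k * cY m τ k - ∑ k : ZMod m, cY m τ k * cX m τ k := by
        rw [Finset.sum_sub_distrib]
    _ = ∑ k : ZMod m, cX m τ k * cY m τ k
        - ∑ k : ZMod m, cY m τ (k - 1) * cX m τ (k - 1) := by rw [hre]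
    _ = ∑ k : ZMod m, (cX m τ k * cY m τ k - cY m τ (k - 1) * cX m τ (k - 1)) := by
        rw [Finset.sum_sub_distrib]
    _ = ∑ k : ZMod m, τ k • ce m τ k := Finset.sum_congr rfl fun k _ => cMain m τ k

end Main

section SMain
variable (m : ℕ) [NeZero m] (ζ : ℂ) (τ : ZMod m → ℂ)

lemma su_mul (g h : ZMod m) : su m ζ τ g * su m ζ τ h = su m ζ τ (g + h) := by
  have hh := RingQuot.mkAlgHom_rel ℂ (SRel.grp (ζ := ζ) (τ := τ) g h)
  rw [map_mul] at hh
  exact hh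

lemma su_zero : su m ζ τ 0 = 1 := by
  have hh := RingQuot.mkAlgHom_rel ℂ (SRel.one (ζ := ζ) (τ := τ))
  rw [map_one] at hh
  exact hh

lemma su_x (g : ZMod m) :
    su m ζ τ g * sx m ζ τ = ζ ^ g.val • (sx m ζ τ * su m ζ τ g) := by
  have hh := RingQuot.mkAlgHom_rel ℂ (SRel.ux (ζ := ζ) (τ := τ) g)
  rw [map_mul, map_smul, map_mul] at hh
  exact hh

lemma su_y (g : ZMod m) :
    su m ζ τ g * sy m ζ τ = ζ ^ (-g).val • (sy m ζ τ * su m ζ τ g) := by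
  have hh := RingQuot.mkAlgHom_rel ℂ (SRel.uy (ζ := ζ) (τ := τ) g)
  rw [map_mul, map_smul, map_mul] at hh
  exact hh

lemma se_def (k : ZMod m) :
    se m ζ τ k = ((m : ℂ))⁻¹ • ∑ g : ZMod m, ζ ^ (k * g).val • su m ζ τ g := by
  rw [se, epsS, map_smul, map_sum]
  congr 1
  exact Finset.sum_congr rfl fun g _ => by rw [map_smul]; rfl

lemma s_comm :
    sx m ζ τ * sy m ζ τ - sy m ζ τ * sx m ζ τ = ∑ k : ZMod m, τ k • se m ζ τ k := by
  have hh := RingQuot.mkAlgHom_rel ℂ (SRel.comm (ζ := ζ) (τ := τ))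
  rw [map_sub, map_mul, map_mul, map_sum] at hh
  simp only [sx, sy, se]
  rw [hh]
  exact Finset.sum_congr rfl fun k _ => map_smul _ _ _

variable {ζ} in
lemma se_su (hζ : IsPrimitiveRoot ζ m) (k h : ZMod m) :
    se m ζ τ k * su m ζ τ h = ζ ^ (-(k * h)).val • se m ζ τ k := by
  rw [se_def, smul_mul_assoc, Finset.sum_mul, smul_comm]
  congr 1
  calc ∑ g : ZMod m, (ζ ^ (k * g).val • su m ζ τ g) * su m ζ τ h
      = ∑ g : ZMod m, ζ ^ (k * g).val • su m ζ τ (g + h) := by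
        exact Finset.sum_congr rfl fun g _ => by rw [smul_mul_assoc, su_mul]
    _ = ∑ g : ZMod m, ζ ^ (-(k * h)).val • (ζ ^ (k * g).val • su m ζ τ g) := by
        refine Fintype.sum_equiv (Equiv.addRight h) _ _ fun g => ?_
        simp only [Equiv.coe_addRight]
        rw [smul_smul, show ζ ^ (-(k * h)).val * ζ ^ (k * (g + h)).val = ζ ^ (k * g).val
          from zc_add' hζ (by ring)]
    _ = ζ ^ (-(k * h)).val • ∑ g : ZMod m, ζ ^ (k * g).val • su m ζ τ g := by
        rw [Finset.smul_sum]

variable {ζ} in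
lemma su_se (hζ : IsPrimitiveRoot ζ m) (h k : ZMod m) :
    su m ζ τ h * se m ζ τ k = ζ ^ (-(k * h)).val • se m ζ τ k := by
  rw [se_def, mul_smul_comm, Finset.mul_sum, smul_comm]
  congr 1
  calc ∑ g : ZMod m, su m ζ τ h * (ζ ^ (k * g).val • su m ζ τ g)
      = ∑ g : ZMod m, ζ ^ (k * g).val • su m ζ τ (h + g) := by
        exact Finset.sum_congr rfl fun g _ => by rw [mul_smul_comm, su_mul]
    _ = ∑ g : ZMod m, ζ ^ (-(k * h)).val • (ζ ^ (k * g).val • su m ζ τ g) := by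
        refine Fintype.sum_equiv (Equiv.addLeft h) _ _ fun g => ?_
        simp only [Equiv.coe_addLeft]
        rw [smul_smul, show ζ ^ (-(k * h)).val * ζ ^ (k * (h + g)).val = ζ ^ (k * g).val
          from zc_add' hζ (by ring)]
    _ = ζ ^ (-(k * h)).val • ∑ g : ZMod m, ζ ^ (k * g).val • su m ζ τ g := by
        rw [Finset.smul_sum]

variable {ζ} in
lemma se_mul (hζ : IsPrimitiveRoot ζ m) (k l : ZMod m) :
    se m ζ τ k * se m ζ τ l = if k = l then se m ζ τ k else 0 := by
  have hm0 : (m : ℂ) ≠ 0 := Nat.cast_ne_zero.mpr (NeZero.ne m)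
  conv_lhs => rw [se_def m ζ τ l]
  rw [mul_smul_comm, Finset.mul_sum]
  have step : ∀ g : ZMod m, se m ζ τ k * (ζ ^ (l * g).val • su m ζ τ g)
      = ζ ^ ((l - k) * g).val • se m ζ τ k := by
    intro g
    rw [mul_smul_comm, se_su m τ hζ, smul_smul,
      show ζ ^ (l * g).val * ζ ^ (-(k * g)).val = ζ ^ ((l - k) * g).val
        from zc_add' hζ (by ring)]
  simp only [step]
  rw [← Finset.sum_smul, char_sum hζ]
  rcases eq_or_ne k l with rfl | hne
  · rw [if_pos (sub_self k), if_pos rfl, smul_smul, inv_mul_cancel₀ hm0, one_smul]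
  · rw [if_neg (fun hh => hne (by linear_combination -hh)), if_neg hne, zero_smul, smul_zero]

variable {ζ} in
lemma se_idem (hζ : IsPrimitiveRoot ζ m) (k : ZMod m) :
    se m ζ τ k * se m ζ τ k = se m ζ τ k := by rw [se_mul m τ hζ, if_pos rfl]

variable {ζ} in
lemma se_sum (hζ : IsPrimitiveRoot ζ m) : ∑ k : ZMod m, se m ζ τ k = 1 := by
  have hm0 : (m : ℂ) ≠ 0 := Nat.cast_ne_zero.mpr (NeZero.ne m)
  calc ∑ k : ZMod m, se m ζ τ k
      = ((m : ℂ))⁻¹ • ∑ k : ZMod m, ∑ g : ZMod m, ζ ^ (k * g).val • su m ζ τ g := by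
        rw [Finset.smul_sum]
        exact Finset.sum_congr rfl fun k _ => se_def m ζ τ k
    _ = ((m : ℂ))⁻¹ • ∑ g : ZMod m, (∑ k : ZMod m, ζ ^ (g * k).val) • su m ζ τ g := by
        rw [Finset.sum_comm]
        congr 1
        refine Finset.sum_congr rfl fun g _ => ?_
        rw [Finset.sum_smul]
        exact Finset.sum_congr rfl fun k _ => by rw [mul_comm k g]
    _ = 1 := by
        have hterm : ∀ g : ZMod m, (∑ k : ZMod m, ζ ^ (g * k).val) • su m ζ τ g
            = if g = 0 then (m : ℂ) • su m ζ τ 0 else 0 := by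
          intro g
          rw [char_sum hζ]
          split_ifs with h
          · subst h; rfl
          · rw [zero_smul]
        simp only [hterm]
        rw [Finset.sum_ite_eq' Finset.univ (0 : ZMod m)
          (fun _ => (m : ℂ) • su m ζ τ 0)]
        rw [if_pos (Finset.mem_univ _), su_zero, smul_smul, inv_mul_cancel₀ hm0, one_smul]

variable {ζ} in
lemma se_x (hζ : IsPrimitiveRoot ζ m) (k : ZMod m) :
    se m ζ τ k * sx m ζ τ = sx m ζ τ * se m ζ τ (k + 1) := by
  rw [se_def, se_def, smul_mul_assoc, mul_smul_comm]
  congr 1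
  rw [Finset.sum_mul, Finset.mul_sum]
  refine Finset.sum_congr rfl fun g _ => ?_
  rw [smul_mul_assoc, su_x, smul_smul,
    show ζ ^ (k * g).val * ζ ^ g.val = ζ ^ ((k + 1) * g).val from zc_add' hζ (by ring),
    mul_smul_comm]

variable {ζ} in
lemma se_y (hζ : IsPrimitiveRoot ζ m) (k : ZMod m) :
    se m ζ τ (k + 1) * sy m ζ τ = sy m ζ τ * se m ζ τ k := by
  rw [se_def, se_def, smul_mul_assoc, mul_smul_comm]
  congr 1
  rw [Finset.sum_mul, Finset.mul_sum]
  refine Finset.sum_congr rfl fun g _ => ?_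
  rw [smul_mul_assoc, su_y, smul_smul,
    show ζ ^ ((k + 1) * g).val * ζ ^ (-g).val = ζ ^ (k * g).val from zc_add' hζ (by ring),
    mul_smul_comm]

variable {ζ} in
lemma su_eq (hζ : IsPrimitiveRoot ζ m) (g : ZMod m) :
    su m ζ τ g = ∑ k : ZMod m, ζ ^ (-(k * g)).val • se m ζ τ k := by
  have hm0 : (m : ℂ) ≠ 0 := Nat.cast_ne_zero.mpr (NeZero.ne m)
  refine Eq.symm ?_
  calc ∑ k : ZMod m, ζ ^ (-(k * g)).val • se m ζ τ k
      = ((m : ℂ))⁻¹ • ∑ k : ZMod m, ∑ h : ZMod m,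
          (ζ ^ (-(k * g)).val * ζ ^ (k * h).val) • su m ζ τ h := by
        rw [Finset.smul_sum]
        refine Finset.sum_congr rfl fun k _ => ?_
        rw [se_def, smul_comm]
        congr 1
        rw [Finset.smul_sum]
        exact Finset.sum_congr rfl fun h _ => by rw [smul_smul]
    _ = ((m : ℂ))⁻¹ • ∑ h : ZMod m, (∑ k : ZMod m, ζ ^ ((h - g) * k).val) • su m ζ τ h := by
        rw [Finset.sum_comm]
        congr 1
        refine Finset.sum_congr rfl fun h _ => ?_
        rw [Finset.sum_smul]
        refine Finset.sum_congr rfl fun k _ => ?_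
        rw [show ζ ^ (-(k * g)).val * ζ ^ (k * h).val = ζ ^ ((h - g) * k).val
          from zc_add' hζ (by ring)]
    _ = su m ζ τ g := by
        have hterm : ∀ h : ZMod m, (∑ k : ZMod m, ζ ^ ((h - g) * k).val) • su m ζ τ h
            = if h = g then (m : ℂ) • su m ζ τ h else 0 := by
          intro h
          rw [char_sum hζ]
          rcases eq_or_ne h g with rfl | hne
          · rw [if_pos (sub_self h), if_pos rfl]
          · rw [if_neg (fun hh => hne (by linear_combination hh)), if_neg hne, zero_smul]
        simp only [hterm]
        rw [Finset.sum_ite_eq' Finset.univ g (fun h => (m : ℂ) • su m ζ τ h)]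
        rw [if_pos (Finset.mem_univ _), smul_smul, inv_mul_cancel₀ hm0, one_smul]

end SMain

section FMap
variable (m : ℕ) [NeZero m] (ζ : ℂ) (τ : ZMod m → ℂ)

/-- Image of the group element `u_g` in `Π_τ(Q)`. -/
noncomputable def cu (g : ZMod m) : CPi m τ :=
  ∑ k : ZMod m, ζ ^ (-(k * g)).val • ce m τ k

lemma cu_def (g : ZMod m) :
    cu m ζ τ g = ∑ k : ZMod m, ζ ^ (-(k * g)).val • ce m τ k := rfl

lemma cu_ce (g k : ZMod m) : cu m ζ τ g * ce m τ k = ζ ^ (-(k * g)).val • ce m τ k := by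
  rw [cu_def, Finset.sum_mul]
  have hterm : ∀ l : ZMod m, (ζ ^ (-(l * g)).val • ce m τ l) * ce m τ k
      = if l = k then ζ ^ (-(l * g)).val • ce m τ l else 0 := by
    intro l
    rw [smul_mul_assoc, ce_mul]
    split_ifs with h
    · rfl
    · rw [smul_zero]
  simp only [hterm]
  rw [Finset.sum_ite_eq' Finset.univ k (fun l => ζ ^ (-(l * g)).val • ce m τ l),
    if_pos (Finset.mem_univ _)]

lemma ce_cu (k g : ZMod m) : ce m τ k * cu m ζ τ g = ζ ^ (-(k * g)).val • ce m τ k := by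
  rw [cu_def, Finset.mul_sum]
  have hterm : ∀ l : ZMod m, ce m τ k * (ζ ^ (-(l * g)).val • ce m τ l)
      = if l = k then ζ ^ (-(l * g)).val • ce m τ l else 0 := by
    intro l
    rw [mul_smul_comm, ce_mul]
    rcases eq_or_ne l k with rfl | h
    · rw [if_pos rfl, if_pos rfl]
    · rw [if_neg (fun hh => h hh.symm), if_neg h, smul_zero]
  simp only [hterm]
  rw [Finset.sum_ite_eq' Finset.univ k (fun l => ζ ^ (-(l * g)).val • ce m τ l),
    if_pos (Finset.mem_univ _)]

variable {ζ} in
lemma cu_mul (hζ : IsPrimitiveRoot ζ m) (g h : ZMod m) :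
    cu m ζ τ g * cu m ζ τ h = cu m ζ τ (g + h) := by
  conv_lhs => rw [cu_def m ζ τ h]
  rw [Finset.mul_sum, cu_def m ζ τ (g + h)]
  refine Finset.sum_congr rfl fun k _ => ?_
  rw [mul_smul_comm, cu_ce, smul_smul,
    show ζ ^ (-(k * h)).val * ζ ^ (-(k * g)).val = ζ ^ (-(k * (g + h))).val
      from zc_add' hζ (by ring)]

lemma cu_zero : cu m ζ τ 0 = 1 := by
  rw [cu_def]
  have : ∀ k : ZMod m, ζ ^ (-(k * 0)).val • ce m τ k = ce m τ k := by
    intro k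
    rw [mul_zero, neg_zero, ZMod.val_zero, pow_zero, one_smul]
  simp only [this]
  exact ce_sum m τ

lemma cu_fx (g : ZMod m) :
    cu m ζ τ g * (∑ k : ZMod m, cX m τ k) = ∑ k : ZMod m, ζ ^ (-(k * g)).val • cX m τ k := by
  rw [cu_def, Finset.sum_mul_sum]
  have hterm : ∀ l k : ZMod m, (ζ ^ (-(l * g)).val • ce m τ l) * cX m τ k
      = if l = k then ζ ^ (-(l * g)).val • cX m τ k else 0 := by
    intro l k
    rw [smul_mul_assoc, ce_cX]
    split_ifs with h
    · rfl
    · rw [smul_zero]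
  simp only [hterm]
  refine Finset.sum_congr rfl fun l _ => ?_
  rw [Finset.sum_ite_eq Finset.univ l (fun k => ζ ^ (-(l * g)).val • cX m τ k),
    if_pos (Finset.mem_univ _)]

lemma fx_cu (g : ZMod m) :
    (∑ k : ZMod m, cX m τ k) * cu m ζ τ g
      = ∑ k : ZMod m, ζ ^ (-((k + 1) * g)).val • cX m τ k := by
  rw [cu_def, Finset.sum_mul_sum]
  have hterm : ∀ k l : ZMod m, cX m τ k * (ζ ^ (-(l * g)).val • ce m τ l)
      = if k + 1 = l then ζ ^ (-(l * g)).val • cX m τ k else 0 := by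
    intro k l
    rw [mul_smul_comm, cX_ce]
    split_ifs with h
    · rfl
    · rw [smul_zero]
  simp only [hterm]
  refine Finset.sum_congr rfl fun k _ => ?_
  rw [Finset.sum_ite_eq Finset.univ (k + 1) (fun l => ζ ^ (-(l * g)).val • cX m τ k),
    if_pos (Finset.mem_univ _)]

lemma cu_fy (g : ZMod m) :
    cu m ζ τ g * (∑ k : ZMod m, cY m τ k)
      = ∑ k : ZMod m, ζ ^ (-((k + 1) * g)).val • cY m τ k := by
  rw [cu_def, Finset.sum_mul_sum]
  have hterm : ∀ l k : ZMod m, (ζ ^ (-(l * g)).val • ce m τ l) * cY m τ k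
      = if l = k + 1 then ζ ^ (-(l * g)).val • cY m τ k else 0 := by
    intro l k
    rw [smul_mul_assoc, ce_cY]
    split_ifs with h
    · rfl
    · rw [smul_zero]
  simp only [hterm]
  rw [Finset.sum_comm]
  refine Finset.sum_congr rfl fun k _ => ?_
  rw [Finset.sum_ite_eq' Finset.univ (k + 1) (fun l => ζ ^ (-(l * g)).val • cY m τ k),
    if_pos (Finset.mem_univ _)]

lemma fy_cu (g : ZMod m) :
    (∑ k : ZMod m, cY m τ k) * cu m ζ τ g = ∑ k : ZMod m, ζ ^ (-(k * g)).val • cY m τ k := by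
  rw [cu_def, Finset.sum_mul_sum]
  have hterm : ∀ k l : ZMod m, cY m τ k * (ζ ^ (-(l * g)).val • ce m τ l)
      = if k = l then ζ ^ (-(l * g)).val • cY m τ k else 0 := by
    intro k l
    rw [mul_smul_comm, cY_ce]
    split_ifs with h
    · rfl
    · rw [smul_zero]
  simp only [hterm]
  refine Finset.sum_congr rfl fun k _ => ?_
  rw [Finset.sum_ite_eq Finset.univ k (fun l => ζ ^ (-(l * g)).val • cY m τ k),
    if_pos (Finset.mem_univ _)]

lemma fxy_comm :
    (∑ k : ZMod m, cX m τ k) * (∑ k : ZMod m, cY m τ k)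
      - (∑ k : ZMod m, cY m τ k) * (∑ k : ZMod m, cX m τ k)
      = ∑ k : ZMod m, τ k • ce m τ k := by
  have h1 : (∑ k : ZMod m, cX m τ k) * (∑ k : ZMod m, cY m τ k)
      = ∑ k : ZMod m, cX m τ k * cY m τ k := by
    rw [Finset.sum_mul_sum]
    refine Finset.sum_congr rfl fun k _ => ?_
    calc ∑ l : ZMod m, cX m τ k * cY m τ l
        = ∑ l : ZMod m, if k = l then cX m τ k * cY m τ k else 0 :=
          Finset.sum_congr rfl fun l _ => cX_cY m τ k l
      _ = cX m τ k * cY m τ k := by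
          rw [Finset.sum_ite_eq Finset.univ k (fun _ => cX m τ k * cY m τ k),
            if_pos (Finset.mem_univ _)]
  have h2 : (∑ k : ZMod m, cY m τ k) * (∑ k : ZMod m, cX m τ k)
      = ∑ k : ZMod m, cY m τ k * cX m τ k := by
    rw [Finset.sum_mul_sum]
    refine Finset.sum_congr rfl fun k _ => ?_
    calc ∑ l : ZMod m, cY m τ k * cX m τ l
        = ∑ l : ZMod m, if k = l then cY m τ k * cX m τ k else 0 :=
          Finset.sum_congr rfl fun l _ => cY_cX m τ k l
      _ = cY m τ k * cX m τ k := by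
          rw [Finset.sum_ite_eq Finset.univ k (fun _ => cY m τ k * cX m τ k),
            if_pos (Finset.mem_univ _)]
  rw [h1, h2, ← Finset.sum_sub_distrib]
  exact cmain_sum m τ

/-- Images of the generators of `S` under the map to `Π`. -/
noncomputable def fGen : SGen m → CPi m τ
  | .x => ∑ k : ZMod m, cX m τ k
  | .y => ∑ k : ZMod m, cY m τ k
  | .u g => cu m ζ τ g

noncomputable def fFree : FreeAlgebra ℂ (SGen m) →ₐ[ℂ] CPi m τ :=
  FreeAlgebra.lift ℂ (fGen m ζ τ)

lemma fFree_gen (a : SGen m) : fFree m ζ τ (sgen a) = fGen m ζ τ a :=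
  FreeAlgebra.lift_ι_apply _ _

variable {ζ} in
lemma fFree_eps (hζ : IsPrimitiveRoot ζ m) (k : ZMod m) :
    fFree m ζ τ (epsS m ζ k) = ce m τ k := by
  have hm0 : (m : ℂ) ≠ 0 := Nat.cast_ne_zero.mpr (NeZero.ne m)
  rw [epsS, map_smul, map_sum]
  have hterm : ∀ g : ZMod m, fFree m ζ τ (ζ ^ (k * g).val • sgen (.u g))
      = ∑ l : ZMod m, (ζ ^ (k * g).val * ζ ^ (-(l * g)).val) • ce m τ l := by
    intro g
    rw [map_smul, fFree_gen]
    show ζ ^ (k * g).val • cu m ζ τ g = _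
    rw [cu_def, Finset.smul_sum]
    exact Finset.sum_congr rfl fun l _ => by rw [smul_smul]
  simp only [hterm]
  rw [Finset.sum_comm]
  have hcol : ∀ l : ZMod m, (∑ g : ZMod m, (ζ ^ (k * g).val * ζ ^ (-(l * g)).val) • ce m τ l)
      = if l = k then (m : ℂ) • ce m τ l else 0 := by
    intro l
    rw [← Finset.sum_smul]
    have : ∑ g : ZMod m, ζ ^ (k * g).val * ζ ^ (-(l * g)).val
        = ∑ g : ZMod m, ζ ^ ((k - l) * g).val := by
      refine Finset.sum_congr rfl fun g _ => ?_
      rw [show ζ ^ (k * g).val * ζ ^ (-(l * g)).val = ζ ^ ((k - l) * g).val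
        from zc_add' hζ (by ring)]
    rw [this, char_sum hζ]
    rcases eq_or_ne l k with rfl | hne
    · rw [if_pos (sub_self l), if_pos rfl]
    · rw [if_neg (fun hh => hne (by linear_combination -hh)), if_neg hne, zero_smul]
  simp only [hcol]
  rw [Finset.sum_ite_eq' Finset.univ k (fun l => (m : ℂ) • ce m τ l),
    if_pos (Finset.mem_univ _), smul_smul, inv_mul_cancel₀ hm0, one_smul]

variable {ζ} in
lemma fFree_rel (hζ : IsPrimitiveRoot ζ m) :
    ∀ ⦃a b : FreeAlgebra ℂ (SGen m)⦄, SRel m ζ τ a b → fFree m ζ τ a = fFree m ζ τ b := by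
  intro a b r
  induction r with
  | grp g h =>
      rw [map_mul, fFree_gen, fFree_gen, fFree_gen]
      exact cu_mul m τ hζ g h
  | one =>
      rw [fFree_gen, map_one]
      exact cu_zero m ζ τ
  | ux g =>
      rw [map_mul, map_smul, map_mul, fFree_gen, fFree_gen]
      show cu m ζ τ g * (∑ k : ZMod m, cX m τ k)
        = ζ ^ g.val • ((∑ k : ZMod m, cX m τ k) * cu m ζ τ g)
      rw [cu_fx, fx_cu, Finset.smul_sum]
      refine Finset.sum_congr rfl fun k _ => ?_
      rw [smul_smul, show ζ ^ g.val * ζ ^ (-((k + 1) * g)).val = ζ ^ (-(k * g)).val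
        from zc_add' hζ (by ring)]
  | uy g =>
      rw [map_mul, map_smul, map_mul, fFree_gen, fFree_gen]
      show cu m ζ τ g * (∑ k : ZMod m, cY m τ k)
        = ζ ^ (-g).val • ((∑ k : ZMod m, cY m τ k) * cu m ζ τ g)
      rw [cu_fy, fy_cu, Finset.smul_sum]
      refine Finset.sum_congr rfl fun k _ => ?_
      rw [smul_smul, show ζ ^ (-g).val * ζ ^ (-(k * g)).val = ζ ^ (-((k + 1) * g)).val
        from zc_add' hζ (by ring)]
  | comm =>
      rw [map_sub, map_mul, map_mul, map_sum, fFree_gen, fFree_gen]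
      have : ∀ k : ZMod m, fFree m ζ τ (τ k • epsS m ζ k) = τ k • ce m τ k := by
        intro k
        rw [map_smul, fFree_eps m τ hζ]
      simp only [this]
      exact fxy_comm m τ

variable {ζ} in
noncomputable def Fhom (hζ : IsPrimitiveRoot ζ m) : SAlg m ζ τ →ₐ[ℂ] CPi m τ :=
  RingQuot.liftAlgHom ℂ ⟨fFree m ζ τ, fFree_rel m τ hζ⟩

variable {ζ} in
lemma Fhom_mk (hζ : IsPrimitiveRoot ζ m) (a : FreeAlgebra ℂ (SGen m)) :
    Fhom m τ hζ (RingQuot.mkAlgHom ℂ (SRel m ζ τ) a) = fFree m ζ τ a :=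
  RingQuot.liftAlgHom_mkAlgHom_apply _ _ _ _

end FMap

section GMap
variable (m : ℕ) [NeZero m] (ζ : ℂ) (τ : ZMod m → ℂ)

noncomputable def gGen : CGen m → SAlg m ζ τ
  | .e k => se m ζ τ k
  | .X k => se m ζ τ k * sx m ζ τ * se m ζ τ (k + 1)
  | .Y k => se m ζ τ (k + 1) * sy m ζ τ * se m ζ τ k

noncomputable def gFree : FreeAlgebra ℂ (CGen m) →ₐ[ℂ] SAlg m ζ τ :=
  FreeAlgebra.lift ℂ (gGen m ζ τ)

lemma gFree_gen (a : CGen m) : gFree m ζ τ (cgen a) = gGen m ζ τ a :=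
  FreeAlgebra.lift_ι_apply _ _

lemma gGen_e (k : ZMod m) : gGen m ζ τ (.e k) = se m ζ τ k := rfl
lemma gGen_X (k : ZMod m) :
    gGen m ζ τ (.X k) = se m ζ τ k * sx m ζ τ * se m ζ τ (k + 1) := rfl
lemma gGen_Y (k : ZMod m) :
    gGen m ζ τ (.Y k) = se m ζ τ (k + 1) * sy m ζ τ * se m ζ τ k := rfl

variable {ζ} in
lemma gFree_rel (hζ : IsPrimitiveRoot ζ m) :
    ∀ ⦃a b : FreeAlgebra ℂ (CGen m)⦄, CRel m τ a b → gFree m ζ τ a = gFree m ζ τ b := by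
  intro a b r
  induction r with
  | idem k l =>
      rw [map_mul, apply_ite (gFree m ζ τ), map_zero]
      simp only [gFree_gen, gGen_e]
      exact se_mul m τ hζ k l
  | sum_one =>
      rw [map_sum, map_one]
      calc ∑ k : ZMod m, gFree m ζ τ (cgen (.e k))
          = ∑ k : ZMod m, se m ζ τ k := Finset.sum_congr rfl fun k _ => gFree_gen m ζ τ _
        _ = 1 := se_sum m τ hζ
  | pathX k =>
      rw [map_mul, map_mul]
      simp only [gFree_gen, gGen_e, gGen_X]
      calc se m ζ τ k * (se m ζ τ k * sx m ζ τ * se m ζ τ (k + 1)) * se m ζ τ (k + 1)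
          = (se m ζ τ k * se m ζ τ k) * (sx m ζ τ * (se m ζ τ (k + 1) * se m ζ τ (k + 1))) := by
            simp only [mul_assoc]
        _ = se m ζ τ k * (sx m ζ τ * se m ζ τ (k + 1)) := by
            rw [se_idem m τ hζ, se_idem m τ hζ]
        _ = se m ζ τ k * sx m ζ τ * se m ζ τ (k + 1) := by rw [mul_assoc]
  | pathY k =>
      rw [map_mul, map_mul]
      simp only [gFree_gen, gGen_e, gGen_Y]
      calc se m ζ τ (k + 1) * (se m ζ τ (k + 1) * sy m ζ τ * se m ζ τ k) * se m ζ τ k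
          = (se m ζ τ (k + 1) * se m ζ τ (k + 1)) * (sy m ζ τ * (se m ζ τ k * se m ζ τ k)) := by
            simp only [mul_assoc]
        _ = se m ζ τ (k + 1) * (sy m ζ τ * se m ζ τ k) := by
            rw [se_idem m τ hζ, se_idem m τ hζ]
        _ = se m ζ τ (k + 1) * sy m ζ τ * se m ζ τ k := by rw [mul_assoc]
  | main k =>
      rw [map_sub, map_mul, map_mul, map_smul]
      simp only [gFree_gen, gGen_e, gGen_X, gGen_Y]
      rw [show (k : ZMod m) - 1 + 1 = k from by ring]
      have t1 : (se m ζ τ k * sx m ζ τ * se m ζ τ (k + 1))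
          * (se m ζ τ (k + 1) * sy m ζ τ * se m ζ τ k)
          = se m ζ τ k * (sx m ζ τ * sy m ζ τ) * se m ζ τ k := by
        calc (se m ζ τ k * sx m ζ τ * se m ζ τ (k + 1))
              * (se m ζ τ (k + 1) * sy m ζ τ * se m ζ τ k)
            = se m ζ τ k * (sx m ζ τ * ((se m ζ τ (k + 1) * se m ζ τ (k + 1)) * sy m ζ τ
                * se m ζ τ k)) := by simp only [mul_assoc]
          _ = se m ζ τ k * (sx m ζ τ * (se m ζ τ (k + 1) * sy m ζ τ * se m ζ τ k)) := by
              rw [se_idem m τ hζ]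
          _ = se m ζ τ k * (sx m ζ τ * (sy m ζ τ * se m ζ τ k * se m ζ τ k)) := by
              rw [se_y m τ hζ]
          _ = se m ζ τ k * (sx m ζ τ * sy m ζ τ) * se m ζ τ k := by
              rw [mul_assoc (sy m ζ τ), se_idem m τ hζ]
              simp only [mul_assoc]
      have t2 : (se m ζ τ k * sy m ζ τ * se m ζ τ (k - 1))
          * (se m ζ τ (k - 1) * sx m ζ τ * se m ζ τ k)
          = se m ζ τ k * (sy m ζ τ * sx m ζ τ) * se m ζ τ k := by
        calc (se m ζ τ k * sy m ζ τ * se m ζ τ (k - 1))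
              * (se m ζ τ (k - 1) * sx m ζ τ * se m ζ τ k)
            = se m ζ τ k * (sy m ζ τ * ((se m ζ τ (k - 1) * se m ζ τ (k - 1)) * sx m ζ τ
                * se m ζ τ k)) := by simp only [mul_assoc]
          _ = se m ζ τ k * (sy m ζ τ * (se m ζ τ (k - 1) * sx m ζ τ * se m ζ τ k)) := by
              rw [se_idem m τ hζ]
          _ = se m ζ τ k * (sy m ζ τ * (sx m ζ τ * se m ζ τ (k - 1 + 1) * se m ζ τ k)) := by
              rw [se_x m τ hζ]
          _ = se m ζ τ k * (sy m ζ τ * (sx m ζ τ * se m ζ τ k * se m ζ τ k)) := by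
              rw [show (k : ZMod m) - 1 + 1 = k from by ring]
          _ = se m ζ τ k * (sy m ζ τ * sx m ζ τ) * se m ζ τ k := by
              rw [mul_assoc (sx m ζ τ), se_idem m τ hζ]
              simp only [mul_assoc]
      rw [t1, t2, ← sub_mul, ← mul_sub, s_comm]
      rw [Finset.mul_sum, Finset.sum_mul]
      have hterm : ∀ l : ZMod m,
          se m ζ τ k * (τ l • se m ζ τ l) * se m ζ τ k
            = if l = k then τ k • se m ζ τ k else 0 := by
        intro l
        rw [mul_smul_comm, smul_mul_assoc, se_mul m τ hζ k l]
        rcases eq_or_ne l k with rfl | h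
        · rw [if_pos rfl, if_pos rfl, se_idem m τ hζ]
        · rw [if_neg (fun hh => h hh.symm), if_neg h, zero_mul, smul_zero]
      simp only [hterm]
      rw [Finset.sum_ite_eq' Finset.univ k (fun _ => τ k • se m ζ τ k),
        if_pos (Finset.mem_univ _)]

variable {ζ} in
noncomputable def Ghom (hζ : IsPrimitiveRoot ζ m) : CPi m τ →ₐ[ℂ] SAlg m ζ τ :=
  RingQuot.liftAlgHom ℂ ⟨gFree m ζ τ, gFree_rel m τ hζ⟩

variable {ζ} in
lemma Ghom_mk (hζ : IsPrimitiveRoot ζ m) (a : FreeAlgebra ℂ (CGen m)) :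
    Ghom m τ hζ (RingQuot.mkAlgHom ℂ (CRel m τ) a) = gFree m ζ τ a :=
  RingQuot.liftAlgHom_mkAlgHom_apply _ _ _ _

end GMap

section Final
variable (m : ℕ) [NeZero m] (ζ : ℂ) (τ : ZMod m → ℂ)

variable {ζ} in
lemma Fhom_se (hζ : IsPrimitiveRoot ζ m) (k : ZMod m) :
    Fhom m τ hζ (se m ζ τ k) = ce m τ k := by
  rw [se, Fhom_mk, fFree_eps m τ hζ]

variable {ζ} in
lemma Fhom_sx (hζ : IsPrimitiveRoot ζ m) :
    Fhom m τ hζ (sx m ζ τ) = ∑ k : ZMod m, cX m τ k := by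
  rw [sx, Fhom_mk]
  exact fFree_gen m ζ τ .x

variable {ζ} in
lemma Fhom_sy (hζ : IsPrimitiveRoot ζ m) :
    Fhom m τ hζ (sy m ζ τ) = ∑ k : ZMod m, cY m τ k := by
  rw [sy, Fhom_mk]
  exact fFree_gen m ζ τ .y

variable {ζ} in
lemma Fhom_su (hζ : IsPrimitiveRoot ζ m) (g : ZMod m) :
    Fhom m τ hζ (su m ζ τ g) = cu m ζ τ g := by
  rw [su, Fhom_mk]
  exact fFree_gen m ζ τ (.u g)

variable {ζ} in
lemma Ghom_ce (hζ : IsPrimitiveRoot ζ m) (k : ZMod m) :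
    Ghom m τ hζ (ce m τ k) = se m ζ τ k := by
  rw [ce, Ghom_mk]
  exact gFree_gen m ζ τ (.e k)

variable {ζ} in
lemma Ghom_cX (hζ : IsPrimitiveRoot ζ m) (k : ZMod m) :
    Ghom m τ hζ (cX m τ k) = se m ζ τ k * sx m ζ τ * se m ζ τ (k + 1) := by
  rw [cX, Ghom_mk]
  exact gFree_gen m ζ τ (.X k)

variable {ζ} in
lemma Ghom_cY (hζ : IsPrimitiveRoot ζ m) (k : ZMod m) :
    Ghom m τ hζ (cY m τ k) = se m ζ τ (k + 1) * sy m ζ τ * se m ζ τ k := by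
  rw [cY, Ghom_mk]
  exact gFree_gen m ζ τ (.Y k)

lemma ce_fx (k : ZMod m) : ce m τ k * (∑ l : ZMod m, cX m τ l) = cX m τ k := by
  rw [Finset.mul_sum]
  calc ∑ l : ZMod m, ce m τ k * cX m τ l
      = ∑ l : ZMod m, if k = l then cX m τ l else 0 :=
        Finset.sum_congr rfl fun l _ => ce_cX m τ k l
    _ = cX m τ k := by
        rw [Finset.sum_ite_eq Finset.univ k (fun l => cX m τ l), if_pos (Finset.mem_univ _)]

lemma ce_fy (k : ZMod m) : ce m τ (k + 1) * (∑ l : ZMod m, cY m τ l) = cY m τ k := by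
  rw [Finset.mul_sum]
  have hterm : ∀ l : ZMod m, ce m τ (k + 1) * cY m τ l = if l = k then cY m τ k else 0 := by
    intro l
    rw [ce_cY]
    rcases eq_or_ne l k with rfl | h
    · rw [if_pos rfl, if_pos rfl]
    · rw [if_neg (fun hh => h (add_right_cancel hh.symm)), if_neg h]
  simp only [hterm]
  rw [Finset.sum_ite_eq' Finset.univ k (fun _ => cY m τ k), if_pos (Finset.mem_univ _)]

variable {ζ} in
lemma FG_s13 (hζ : IsPrimitiveRoot ζ m) :
    (Fhom m τ hζ).comp (Ghom m τ hζ) = AlgHom.id ℂ (CPi m τ) := by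
  refine RingQuot.ringQuot_ext' ℂ _ _ (FreeAlgebra.hom_ext (funext fun a => ?_))
  have key : Fhom m τ hζ (Ghom m τ hζ (RingQuot.mkAlgHom ℂ (CRel m τ) (cgen a)))
      = RingQuot.mkAlgHom ℂ (CRel m τ) (cgen a) := by
    cases a with
    | e k =>
        show Fhom m τ hζ (Ghom m τ hζ (ce m τ k)) = ce m τ k
        rw [Ghom_ce m τ hζ, Fhom_se m τ hζ]
    | X k =>
        show Fhom m τ hζ (Ghom m τ hζ (cX m τ k)) = cX m τ k
        rw [Ghom_cX m τ hζ, map_mul, map_mul, Fhom_se m τ hζ, Fhom_se m τ hζ,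
          Fhom_sx m τ hζ, ce_fx]
        rw [cX_ce, if_pos rfl]
    | Y k =>
        show Fhom m τ hζ (Ghom m τ hζ (cY m τ k)) = cY m τ k
        rw [Ghom_cY m τ hζ, map_mul, map_mul, Fhom_se m τ hζ, Fhom_se m τ hζ,
          Fhom_sy m τ hζ, ce_fy]
        rw [cY_ce, if_pos rfl]
  simpa [cgen] using key

variable {ζ} in
lemma GF_s13 (hζ : IsPrimitiveRoot ζ m) :
    (Ghom m τ hζ).comp (Fhom m τ hζ) = AlgHom.id ℂ (SAlg m ζ τ) := by
  refine RingQuot.ringQuot_ext' ℂ _ _ (FreeAlgebra.hom_ext (funext fun a => ?_))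
  have key : Ghom m τ hζ (Fhom m τ hζ (RingQuot.mkAlgHom ℂ (SRel m ζ τ) (sgen a)))
      = RingQuot.mkAlgHom ℂ (SRel m ζ τ) (sgen a) := by
    cases a with
    | x =>
        show Ghom m τ hζ (Fhom m τ hζ (sx m ζ τ)) = sx m ζ τ
        rw [Fhom_sx m τ hζ, map_sum]
        calc ∑ k : ZMod m, Ghom m τ hζ (cX m τ k)
            = ∑ k : ZMod m, sx m ζ τ * se m ζ τ (k + 1) := by
              refine Finset.sum_congr rfl fun k _ => ?_
              rw [Ghom_cX m τ hζ, se_x m τ hζ, mul_assoc, se_idem m τ hζ]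
          _ = sx m ζ τ * ∑ k : ZMod m, se m ζ τ (k + 1) := by rw [Finset.mul_sum]
          _ = sx m ζ τ * ∑ k : ZMod m, se m ζ τ k := by
              congr 1
              exact Fintype.sum_equiv (Equiv.addRight (1 : ZMod m)) _ _ fun k => rfl
          _ = sx m ζ τ := by rw [se_sum m τ hζ, mul_one]
    | y =>
        show Ghom m τ hζ (Fhom m τ hζ (sy m ζ τ)) = sy m ζ τ
        rw [Fhom_sy m τ hζ, map_sum]
        calc ∑ k : ZMod m, Ghom m τ hζ (cY m τ k)
            = ∑ k : ZMod m, sy m ζ τ * se m ζ τ k := by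
              refine Finset.sum_congr rfl fun k _ => ?_
              rw [Ghom_cY m τ hζ, se_y m τ hζ, mul_assoc, se_idem m τ hζ]
          _ = sy m ζ τ * ∑ k : ZMod m, se m ζ τ k := by rw [Finset.mul_sum]
          _ = sy m ζ τ := by rw [se_sum m τ hζ, mul_one]
    | u g =>
        show Ghom m τ hζ (Fhom m τ hζ (su m ζ τ g)) = su m ζ τ g
        rw [Fhom_su m τ hζ, cu_def, map_sum]
        calc ∑ k : ZMod m, Ghom m τ hζ (ζ ^ (-(k * g)).val • ce m τ k)
            = ∑ k : ZMod m, ζ ^ (-(k * g)).val • se m ζ τ k := by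
              refine Finset.sum_congr rfl fun k _ => ?_
              rw [map_smul, Ghom_ce m τ hζ]
          _ = su m ζ τ g := (su_eq m τ hζ g).symm
  simpa [sgen] using key

end Final


/-- The assignment `ε_i ↦ e_i`, `x ↦ ∑ X_i`, `y ↦ ∑ Y_i` extends to an algebra
isomorphism `S_τ(Γ) ≃ Π_τ(Q)`. -/
theorem stmt13 (m : ℕ) [NeZero m] (ζ : ℂ) (hζ : IsPrimitiveRoot ζ m) (τ : ZMod m → ℂ) :
    ∃ f : SAlg m ζ τ ≃ₐ[ℂ] CPi m τ,
      (∀ k : ZMod m,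
        f (RingQuot.mkAlgHom ℂ (SRel m ζ τ) (epsS m ζ k)) =
          RingQuot.mkAlgHom ℂ (CRel m τ) (cgen (.e k))) ∧
      f (RingQuot.mkAlgHom ℂ (SRel m ζ τ) (sgen .x)) =
        ∑ k : ZMod m, RingQuot.mkAlgHom ℂ (CRel m τ) (cgen (.X k)) ∧
      f (RingQuot.mkAlgHom ℂ (SRel m ζ τ) (sgen .y)) =
        ∑ k : ZMod m, RingQuot.mkAlgHom ℂ (CRel m τ) (cgen (.Y k)) := by
  refine ⟨AlgEquiv.ofAlgHom (Fhom m τ hζ) (Ghom m τ hζ) (FG_s13 m τ hζ) (GF_s13 m τ hζ),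
    fun k => ?_, ?_, ?_⟩
  · exact Fhom_se m τ hζ k
  · exact Fhom_sx m τ hζ
  · exact Fhom_sy m τ hζ
end

section
/- Let τ ∈ C^m be regular (τ·β ≠ 0 for all roots β of the affine root system of type Ã_m), so that Π_τ(Q) is a simple ring with no nonzero finite-dimensional modules. Let λ = (λ_∞, τ) and let V be a Π_λ(Q_∞)-module of dimension vector α = (1, n_0, ..., n_{m−1}) (so dim V e_∞ = 1). Then V is a simple module. -/
/-- Generators of the deformed preprojective algebra `Π_λ(Q_∞)` of the framed cyclic
quiver: the cyclic quiver on vertices `ℤ/mℤ` together with an extra vertex `∞` and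
an extra arrow `v : 0 → ∞` (with reverse `w`). -/
inductive FGen (m : ℕ) : Type
  | X (k : ZMod m) | Y (k : ZMod m) | e (k : ZMod m) | v | w | einf

noncomputable def fgen {m : ℕ} (a : FGen m) : FreeAlgebra ℂ (FGen m) := FreeAlgebra.ι ℂ a

/-- Defining relations of `Π_λ(Q_∞)`, `λ = (λ_∞, τ)`: orthogonal idempotents
`e_∞, e_0, …, e_{m-1}` summing to `1`, the path relations, and
`vw = λ_∞ e_∞`, `X_0 Y_0 - Y_{m-1} X_{m-1} - wv = τ_0 e_0`,
`X_k Y_k - Y_{k-1} X_{k-1} = τ_k e_k` for `k ≠ 0`. -/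
inductive FRel (m : ℕ) [NeZero m] (laminf : ℂ) (τ : ZMod m → ℂ) :
    FreeAlgebra ℂ (FGen m) → FreeAlgebra ℂ (FGen m) → Prop
  | idem (k l : ZMod m) :
      FRel m laminf τ (fgen (.e k) * fgen (.e l)) (if k = l then fgen (.e k) else 0)
  | idem_inf : FRel m laminf τ (fgen .einf * fgen .einf) (fgen .einf)
  | orth₁ (k : ZMod m) : FRel m laminf τ (fgen (.e k) * fgen .einf) 0
  | orth₂ (k : ZMod m) : FRel m laminf τ (fgen .einf * fgen (.e k)) 0
  | sum_one : FRel m laminf τ (fgen .einf + ∑ k : ZMod m, fgen (.e k)) 1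
  | pathX (k : ZMod m) :
      FRel m laminf τ (fgen (.e k) * fgen (.X k) * fgen (.e (k + 1))) (fgen (.X k))
  | pathY (k : ZMod m) :
      FRel m laminf τ (fgen (.e (k + 1)) * fgen (.Y k) * fgen (.e k)) (fgen (.Y k))
  | pathv : FRel m laminf τ (fgen .einf * fgen .v * fgen (.e 0)) (fgen .v)
  | pathw : FRel m laminf τ (fgen (.e 0) * fgen .w * fgen .einf) (fgen .w)
  | vw : FRel m laminf τ (fgen .v * fgen .w) (laminf • fgen .einf)
  | main (k : ZMod m) :
      FRel m laminf τ
        (fgen (.X k) * fgen (.Y k) - fgen (.Y (k - 1)) * fgen (.X (k - 1)) -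
          (if k = 0 then fgen .w * fgen .v else 0))
        (τ k • fgen (.e k))

/-- The deformed preprojective algebra `Π_λ(Q_∞)` of the framed cyclic quiver. -/
noncomputable abbrev FPi (m : ℕ) [NeZero m] (laminf : ℂ) (τ : ZMod m → ℂ) :=
  RingQuot (FRel m laminf τ)

open Module

/-- Let `τ` be such that the quotient `Π_λ/⟨e_∞⟩ ≅ Π_τ(Q)` admits no nonzero
finite-dimensional modules (which holds when `τ` is regular, `Π_τ(Q)` being then a
simple ring). If `V` is a `Π_λ(Q_∞)`-module of dimension vector `α = (1, n_0, …, n_{m-1})`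
(so `dim (e_∞ V) = 1`), then `V` is a simple module. -/
theorem stmt16 (m : ℕ) [NeZero m] (laminf : ℂ) (τ : ZMod m → ℂ)
    (hreg : ∀ (W : Type) [AddCommGroup W] [Module ℂ W] [Module (FPi m laminf τ) W]
      [IsScalarTower ℂ (FPi m laminf τ) W], FiniteDimensional ℂ W →
      (∀ w : W, RingQuot.mkAlgHom ℂ (FRel m laminf τ) (fgen .einf) • w = 0) →
      Subsingleton W)
    (nvec : ZMod m → ℕ)
    (V : Type) [AddCommGroup V] [Module ℂ V] [Module (FPi m laminf τ) V]
    [IsScalarTower ℂ (FPi m laminf τ) V] [FiniteDimensional ℂ V]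
    (hinf : finrank ℂ (Submodule.span ℂ
      (Set.range fun x : V => RingQuot.mkAlgHom ℂ (FRel m laminf τ) (fgen .einf) • x)) = 1)
    (hdim : ∀ k : ZMod m, finrank ℂ (Submodule.span ℂ
      (Set.range fun x : V => RingQuot.mkAlgHom ℂ (FRel m laminf τ) (fgen (.e k)) • x)) =
        nvec k) :
    IsSimpleModule (FPi m laminf τ) V := by
  classical
  set ε : FPi m laminf τ := RingQuot.mkAlgHom ℂ (FRel m laminf τ) (fgen .einf) with hε
  set S : Submodule ℂ V := Submodule.span ℂ (Set.range fun x : V => ε • x) with hS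
  haveI hVnt : Nontrivial V := by
    by_contra h
    rw [not_nontrivial_iff_subsingleton] at h
    have hbot : S = ⊥ := by
      rw [Submodule.span_eq_bot]
      intro x _
      exact Subsingleton.elim x 0
    rw [hbot] at hinf
    simp [finrank_bot] at hinf
  rw [isSimpleModule_iff]
  constructor
  intro p
  by_cases hp : ∀ x ∈ p, ε • x = 0
  · left
    have hfd : FiniteDimensional ℂ ↥p := by
      have : FiniteDimensional ℂ ↥(p.restrictScalars ℂ) := inferInstance
      exact this
    have hsub : Subsingleton ↥p := by
      refine hreg ↥p hfd ?_
      intro w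
      exact Subtype.ext (hp (w : V) w.2)
    exact Submodule.eq_bot_of_subsingleton
  · right
    push_neg at hp
    obtain ⟨x, hxp, hx0⟩ := hp
    have hxS : ε • x ∈ S := Submodule.subset_span ⟨x, rfl⟩
    have hle : Submodule.span ℂ {ε • x} ≤ S := Submodule.span_le.mpr
      (Set.singleton_subset_iff.mpr hxS)
    have heq : Submodule.span ℂ {ε • x} = S := by
      apply Submodule.eq_of_le_of_finrank_eq hle
      rw [finrank_span_singleton hx0, hinf]
    have hmem : ∀ y : V, ε • y ∈ p := by
      intro y
      have hyS : ε • y ∈ S := Submodule.subset_span ⟨y, rfl⟩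
      rw [← heq, Submodule.mem_span_singleton] at hyS
      obtain ⟨c, hc⟩ := hyS
      rw [← hc]
      exact p.smul_of_tower_mem c (p.smul_mem ε hxp)
    have hfdq : FiniteDimensional ℂ (V ⧸ p) :=
      FiniteDimensional.of_surjective (p.mkQ.restrictScalars ℂ)
        (Submodule.mkQ_surjective p)
    have hsub : Subsingleton (V ⧸ p) := by
      refine hreg (V ⧸ p) hfdq ?_
      intro w
      obtain ⟨y, rfl⟩ := Submodule.mkQ_surjective p w
      rw [Submodule.mkQ_apply, ← Submodule.Quotient.mk_smul,
        Submodule.Quotient.mk_eq_zero]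
      exact hmem y
    exact Submodule.Quotient.subsingleton_iff.mp hsub
end

section
/- For matrices X̄, Ȳ ∈ End(C^n), v̄ ∈ Hom(C, C^n), w̄ ∈ Hom(C^n, C) satisfying [X̄, Ȳ] + Id + v̄ w̄ = 0, the stabilizer in GL(n, C) of the quadruple (X̄, Ȳ, v̄, w̄) under the action g·(X̄,Ȳ,v̄,w̄) = (gX̄g^{−1}, gȲg^{−1}, gv̄, w̄g^{−1}) is trivial, i.e., GL(n,C) acts freely on the space of such quadruples. -/
open Matrix

/-- `GL(n,ℂ)` acts freely on the space of quadruples `(X̄, Ȳ, v̄, w̄)` with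
`[X̄,Ȳ] + Id + v̄w̄ = 0`: any `g` stabilizing such a quadruple (i.e. with
`gX̄g⁻¹ = X̄`, `gȲg⁻¹ = Ȳ`, `gv̄ = v̄`, `w̄g⁻¹ = w̄`) is the identity. -/
theorem stmt18 (n : ℕ) (X Y : Matrix (Fin n) (Fin n) ℂ) (v w : Fin n → ℂ)
    (h : X * Y - Y * X + 1 + Matrix.vecMulVec v w = 0)
    (g : GL (Fin n) ℂ)
    (hX : (g : Matrix (Fin n) (Fin n) ℂ) * X * (↑g⁻¹ : Matrix (Fin n) (Fin n) ℂ) = X)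
    (hY : (g : Matrix (Fin n) (Fin n) ℂ) * Y * (↑g⁻¹ : Matrix (Fin n) (Fin n) ℂ) = Y)
    (hv : Matrix.mulVec (g : Matrix (Fin n) (Fin n) ℂ) v = v)
    (hw : Matrix.vecMul w (↑g⁻¹ : Matrix (Fin n) (Fin n) ℂ) = w) :
    g = 1 := by
  set G : Matrix (Fin n) (Fin n) ℂ := (g : Matrix (Fin n) (Fin n) ℂ) with hG
  set Gi : Matrix (Fin n) (Fin n) ℂ := (↑g⁻¹ : Matrix (Fin n) (Fin n) ℂ) with hGi
  have hginv : Gi * G = 1 := g.inv_mul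
  -- commutation
  have hXc : G * X = X * G := by
    calc G * X = G * X * (Gi * G) := by rw [hginv, mul_one]
    _ = (G * X * Gi) * G := by rw [mul_assoc (G * X) Gi G]
    _ = X * G := by rw [hX]
  have hYc : G * Y = Y * G := by
    calc G * Y = G * Y * (Gi * G) := by rw [hginv, mul_one]
    _ = (G * Y * Gi) * G := by rw [mul_assoc (G * Y) Gi G]
    _ = Y * G := by rw [hY]
  -- w is fixed: w ᵥ* G = w
  have hwG : Matrix.vecMul w G = w := by
    calc Matrix.vecMul w G = Matrix.vecMul (Matrix.vecMul w Gi) G := by rw [hw]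
    _ = Matrix.vecMul w (Gi * G) := by rw [Matrix.vecMul_vecMul]
    _ = w := by rw [hginv, Matrix.vecMul_one]
  set M : Matrix (Fin n) (Fin n) ℂ := G - 1 with hM
  have hwM : Matrix.vecMul w M = 0 := by
    simp [hM, Matrix.vecMul_sub, hwG]
  have hMX : X * M = M * X := by
    simp [hM, Matrix.mul_sub, Matrix.sub_mul, hXc]
  have hMY : Y * M = M * Y := by
    simp [hM, Matrix.mul_sub, Matrix.sub_mul, hYc]
  set V : Submodule ℂ (Fin n → ℂ) := LinearMap.range (Matrix.toLin' M) with hV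
  have hXV : ∀ x ∈ V, Matrix.toLin' X x ∈ V := by
    rintro x ⟨u, rfl⟩
    refine ⟨Matrix.toLin' X u, ?_⟩
    have : Matrix.toLin' (M * X) u = Matrix.toLin' (X * M) u := by rw [hMX]
    simpa [Matrix.toLin'_mul] using this
  have hYV : ∀ x ∈ V, Matrix.toLin' Y x ∈ V := by
    rintro x ⟨u, rfl⟩
    refine ⟨Matrix.toLin' Y u, ?_⟩
    have : Matrix.toLin' (M * Y) u = Matrix.toLin' (Y * M) u := by rw [hMY]
    simpa [Matrix.toLin'_mul] using this
  -- w vanishes on V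
  have hwV : ∀ x ∈ V, w ⬝ᵥ x = 0 := by
    rintro x ⟨u, rfl⟩
    have hx : Matrix.toLin' M u = M.mulVec u := rfl
    rw [hx, Matrix.dotProduct_mulVec, hwM, zero_dotProduct]
  -- the key relation
  have h1 : X * Y - Y * X + 1 = -(Matrix.vecMulVec v w) := eq_neg_of_add_eq_zero_left h
  have hrel : X * Y - Y * X = -1 - Matrix.vecMulVec v w := by
    have h2 := eq_sub_of_add_eq h1
    rw [h2]; abel
  set Xr := (Matrix.toLin' X).restrict hXV with hXr
  set Yr := (Matrix.toLin' Y).restrict hYV with hYr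
  have hcomm : Xr ∘ₗ Yr - Yr ∘ₗ Xr = -LinearMap.id := by
    refine LinearMap.ext fun x => Subtype.ext ?_
    have hx : (x : Fin n → ℂ) ∈ V := x.2
    have hA : Matrix.toLin' X (Matrix.toLin' Y x) - Matrix.toLin' Y (Matrix.toLin' X x)
        = Matrix.toLin' (X * Y - Y * X) x := by
      simp [Matrix.toLin'_mul, map_sub, LinearMap.sub_apply]
    have hvw : Matrix.toLin' (Matrix.vecMulVec v w) (x : Fin n → ℂ) = 0 := by
      have hmv : Matrix.toLin' (Matrix.vecMulVec v w) (x : Fin n → ℂ)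
          = (Matrix.vecMulVec v w).mulVec x := rfl
      rw [hmv]
      funext i
      have : (Matrix.vecMulVec v w).mulVec (x : Fin n → ℂ) i = v i * (w ⬝ᵥ (x : Fin n → ℂ)) := by
        simp [Matrix.mulVec, Matrix.vecMulVec, dotProduct, mul_assoc, ← Finset.mul_sum]
      rw [this, hwV x hx, mul_zero]; rfl
    have hB : Matrix.toLin' (X * Y - Y * X) (x : Fin n → ℂ) = -(x : Fin n → ℂ) := by
      rw [hrel]
      simp [map_sub, hvw, Matrix.toLin'_one]
    calc ((Xr ∘ₗ Yr - Yr ∘ₗ Xr) x : Fin n → ℂ)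
        = Matrix.toLin' X (Matrix.toLin' Y x) - Matrix.toLin' Y (Matrix.toLin' X x) := by
          simp [hXr, hYr, LinearMap.restrict_coe_apply]
    _ = -(x : Fin n → ℂ) := by rw [hA, hB]
    _ = ((-LinearMap.id : V →ₗ[ℂ] V) x : Fin n → ℂ) := by simp
  have htr := congrArg (LinearMap.trace ℂ V) hcomm
  have t1 : LinearMap.trace ℂ V (Xr ∘ₗ Yr - Yr ∘ₗ Xr) = 0 := by
    rw [map_sub (LinearMap.trace ℂ V) (Xr ∘ₗ Yr) (Yr ∘ₗ Xr),
      LinearMap.trace_comp_comm' Yr Xr, sub_self]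
  have t2 : LinearMap.trace ℂ V (-(LinearMap.id : V →ₗ[ℂ] V))
      = -(Module.finrank ℂ V : ℂ) := by
    rw [map_neg (LinearMap.trace ℂ V) (LinearMap.id : V →ₗ[ℂ] V), LinearMap.trace_id]
  have hfr : Module.finrank ℂ V = 0 := by
    have h0 : ((Module.finrank ℂ V : ℂ)) = 0 := by
      have h4 : -((Module.finrank ℂ V : ℂ)) = 0 := by rw [← t2, ← htr, t1]
      rwa [neg_eq_zero] at h4
    exact_mod_cast h0
  have hVbot : V = ⊥ := Submodule.finrank_eq_zero.mp hfr
  have hM0 : M = 0 := by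
    have hz : Matrix.toLin' M = 0 := LinearMap.range_eq_bot.mp hVbot
    have := Matrix.toLin'.injective (show Matrix.toLin' M = Matrix.toLin' 0 by rw [hz, map_zero])
    simpa using this
  have hG1 : G = 1 := by
    have h3 : G - 1 = 0 := by rw [← hM]; exact hM0
    rw [sub_eq_zero] at h3
    exact h3
  exact Units.ext (by rw [← hG, hG1]; rfl)
end
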